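/- arXiv:math/0402282 — 9 statements merged into one kernel-verified Lean document; each statement's English description precedes it below -/
import Mathlib

section
/- Let V = ℝ^{2s} with basis U_1,...,U_s,T_1,...,T_s and let B be the 4-tensor with nonzero components (up to the ℤ₂ curvature symmetries) B(U_i,U_j,U_k,T_l) = δ_{il}δ_{jk} - δ_{ik}δ_{jl}. If ξ₁, ξ₂ ∈ V are nonzero vectors such that B(ξ₁,ξ₂,η₁,η₂) = 0 and B(ξ₁,η₁,η₂,ξ₂) = 0 for all η₁,η₂ ∈ V, then ξ₁ and ξ₂ both lie in Span{T_1,...,T_s}. -/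
/-- `ℝ^{2s}` with coordinates `(u, t)`: `x.1` are the `U`-coordinates, `x.2` the `T`-coordinates. -/
abbrev VUT (s : ℕ) := (Fin s → ℝ) × (Fin s → ℝ)

/-- The Euclidean dot product on `Fin s → ℝ`. -/
def dotp {s : ℕ} (x y : Fin s → ℝ) : ℝ := ∑ i, x i * y i

/-- The multilinear extension (respecting the curvature symmetries) of the algebraic
curvature tensor whose only nonzero components up to the `ℤ₂` symmetries are
`B(U_i,U_j,U_k,T_l) = δ_{il}δ_{jk} - δ_{ik}δ_{jl}`. -/
def B2 {s : ℕ} (a b c d : VUT s) : ℝ :=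
    (dotp a.1 d.2 * dotp b.1 c.1 - dotp a.1 c.1 * dotp b.1 d.2)
  - (dotp a.1 c.2 * dotp b.1 d.1 - dotp a.1 d.1 * dotp b.1 c.2)
  + (dotp c.1 b.2 * dotp d.1 a.1 - dotp c.1 a.1 * dotp d.1 b.2)
  - (dotp c.1 a.2 * dotp d.1 b.1 - dotp c.1 b.1 * dotp d.1 a.2)

lemma dotp_single {s : ℕ} (x : Fin s → ℝ) (i : Fin s) :
    dotp x (Pi.single i 1) = x i := by
  simp [dotp, Pi.single_apply, mul_ite]

lemma dotp_single' {s : ℕ} (x : Fin s → ℝ) (i : Fin s) :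
    dotp (Pi.single i 1) x = x i := by
  simp [dotp, Pi.single_apply, ite_mul]

lemma dotp_single_single {s : ℕ} (i j : Fin s) :
    dotp (Pi.single i (1:ℝ)) (Pi.single j 1) = if i = j then 1 else 0 := by
  simp [dotp_single', Pi.single_apply]

lemma dotp_zero {s : ℕ} (x : Fin s → ℝ) : dotp x 0 = 0 := by simp [dotp]
lemma zero_dotp {s : ℕ} (x : Fin s → ℝ) : dotp 0 x = 0 := by simp [dotp]

lemma key_trick {s : ℕ} (hs : 2 ≤ s) (x y : Fin s → ℝ) (c : ℝ)
    (h : ∀ i j : Fin s, x j * y i = if i = j then c else 0) :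
    ∀ i j : Fin s, x j * y i = 0 := by
  have hne : (⟨0, by omega⟩ : Fin s) ≠ ⟨1, by omega⟩ := by
    simp [Fin.ext_iff]
  have h00 := h ⟨0, by omega⟩ ⟨0, by omega⟩
  have h11 := h ⟨1, by omega⟩ ⟨1, by omega⟩
  have h01 := h ⟨0, by omega⟩ ⟨1, by omega⟩
  have h10 := h ⟨1, by omega⟩ ⟨0, by omega⟩
  rw [if_pos rfl] at h00 h11
  rw [if_neg hne.symm] at h10
  rw [if_neg hne] at h01
  have hc : c = 0 := by
    have : c * c = 0 := by
      calc c * c = (x ⟨0, by omega⟩ * y ⟨0, by omega⟩) *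
          (x ⟨1, by omega⟩ * y ⟨1, by omega⟩) := by rw [h00, h11]
        _ = (x ⟨1, by omega⟩ * y ⟨0, by omega⟩) *
          (x ⟨0, by omega⟩ * y ⟨1, by omega⟩) := by ring
        _ = 0 := by rw [h01]; ring
    exact pow_eq_zero_iff (n := 2) (by norm_num) |>.mp (by rw [sq]; exact this)
  intro i j
  simp [h i j, hc]

lemma mem_span_T {s : ℕ} (x : VUT s) (hx : x.1 = 0) :
    x ∈ Submodule.span ℝ (Set.range fun i : Fin s => ((0, Pi.single i 1) : VUT s)) := by
  have hrepr : x = ∑ i : Fin s, x.2 i • ((0, Pi.single i 1) : VUT s) := by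
    refine Prod.ext ?_ ?_
    · rw [Prod.fst_sum]; simp [hx]
    · simp only [Prod.snd_sum, Prod.smul_snd]
      funext k
      simp [Finset.sum_apply, Pi.single_apply, mul_ite]
  rw [hrepr]
  exact Submodule.sum_mem _ fun i _ => Submodule.smul_mem _ _
    (Submodule.subset_span ⟨i, rfl⟩)

/-- Lemma 4.2 (1): if `ξ₁, ξ₂ ≠ 0`, `B(ξ₁,ξ₂,·,·) ≡ 0` and `B(ξ₁,·,·,ξ₂) ≡ 0`, then both
`ξ₁` and `ξ₂` lie in `Span{T_1,...,T_s}`. -/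
theorem stmt2 (s : ℕ) (hs : 2 ≤ s) (ξ₁ ξ₂ : VUT s) (h1 : ξ₁ ≠ 0) (h2 : ξ₂ ≠ 0)
    (hB : ∀ η₁ η₂ : VUT s, B2 ξ₁ ξ₂ η₁ η₂ = 0)
    (hB' : ∀ η₁ η₂ : VUT s, B2 ξ₁ η₁ η₂ ξ₂ = 0) :
    ξ₁ ∈ Submodule.span ℝ (Set.range fun i : Fin s => ((0, Pi.single i 1) : VUT s)) ∧
    ξ₂ ∈ Submodule.span ℝ (Set.range fun i : Fin s => ((0, Pi.single i 1) : VUT s)) := by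
  obtain ⟨a, p⟩ := ξ₁
  obtain ⟨b, q⟩ := ξ₂
  -- relation T : a_j * b_i = δ_{ij} ⟨a,b⟩
  have hT : ∀ i j : Fin s, a j * b i = if i = j then dotp a b else 0 := by
    intro i j
    have := hB' (Pi.single i 1, 0) (0, Pi.single j 1)
    simp only [B2, dotp_single, dotp_single', dotp_single_single, dotp_zero, zero_dotp] at this
    rcases eq_or_ne i j with hij | hij
    · subst hij; simp [Pi.single_apply] at this ⊢; linarith
    · rw [if_neg hij]
      simp [Pi.single_apply, hij] at this
      exact mul_eq_zero.mpr this
  have hT0 : ∀ i j : Fin s, a j * b i = 0 := key_trick hs a b _ hT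
  -- relation R : a_j q_i + p_j b_i = δ_{ij}(⟨a,q⟩+⟨b,p⟩)
  have hR : ∀ i j : Fin s, a j * q i + p j * b i =
      if i = j then dotp a q + dotp b p else 0 := by
    intro i j
    have := hB' (Pi.single i 1, 0) (Pi.single j 1, 0)
    simp only [B2, dotp_single, dotp_single', dotp_single_single, dotp_zero, zero_dotp] at this
    rcases eq_or_ne i j with hij | hij
    · subst hij; simp [Pi.single_apply] at this ⊢; linarith
    · rw [if_neg hij]
      simp [Pi.single_apply, hij, Ne.symm hij] at this; linarith
  have ha0b0 : a = 0 ∧ b = 0 := by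
    rcases forall_or_exists_not (fun j => a j = 0) with ha | ⟨j0, hj0⟩
    · -- a = 0 : relation R becomes p_j b_i = δ c, so b = 0 (since p ≠ 0)
      have ha' : a = 0 := funext ha
      have hp : p ≠ 0 := by
        intro hp'; exact h1 (by simp [ha', hp', Prod.ext_iff])
      have hR' : ∀ i j : Fin s, p j * b i =
          if i = j then dotp (0 : Fin s → ℝ) q + dotp b p else 0 := by
        intro i j; have := hR i j; rwa [ha', Pi.zero_apply, zero_mul, zero_add] at this
      have h0 := key_trick hs p b _ hR'
      have hb : b = 0 := by
        obtain ⟨j1, hj1⟩ := Function.ne_iff.mp hp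
        funext i
        have := h0 i j1
        rcases mul_eq_zero.mp this with h | h
        · exact absurd h hj1
        · exact h
      exact ⟨ha', hb⟩
    · -- a j0 ≠ 0, so from hT0 b = 0, then from hR a_j q_i = δ c, so a = 0 (since q ≠ 0)
      have hb : b = 0 := by
        funext i
        rcases mul_eq_zero.mp (hT0 i j0) with h | h
        · exact absurd h hj0
        · exact h
      have hq : q ≠ 0 := by
        intro hq'; exact h2 (by simp [hb, hq', Prod.ext_iff])
      have hR' : ∀ i j : Fin s, a j * q i =
          if i = j then dotp a q + dotp (0 : Fin s → ℝ) p else 0 := by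
        intro i j; have := hR i j; rwa [hb, Pi.zero_apply, mul_zero, add_zero] at this
      have h0 := key_trick hs a q _ hR'
      have ha : a = 0 := by
        obtain ⟨i1, hi1⟩ := Function.ne_iff.mp hq
        funext j
        rcases mul_eq_zero.mp (h0 i1 j) with h | h
        · exact h
        · exact absurd h hi1
      exact ⟨ha, hb⟩
  exact ⟨mem_span_T _ ha0b0.1, mem_span_T _ ha0b0.2⟩
end

section
/- Let V = ℝ^{2s} (s ≥ 2) with the curvature tensor B whose nonzero components are B(U_i,U_j,U_k,T_l) = δ_{il}δ_{jk} - δ_{ik}δ_{jl}. Then (V,B) is irreducible: there is no decomposition V = W₁ ⊕ W₂ with both W₁,W₂ nonzero such that B vanishes whenever one argument is in W₁ and another is in W₂. -/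
lemma dotp_comm {s : ℕ} (x y : Fin s → ℝ) : dotp x y = dotp y x := by
  simp [dotp, mul_comm]

lemma dotp_ind_left {s : ℕ} (i : Fin s) (x : Fin s → ℝ) :
    dotp (fun m => if m = i then (1:ℝ) else 0) x = x i := by
  simp [dotp, ite_mul]

lemma dotp_ind_right {s : ℕ} (i : Fin s) (x : Fin s → ℝ) :
    dotp x (fun m => if m = i then (1:ℝ) else 0) = x i := by
  simp [dotp, mul_ite]

lemma dotp_zero_left {s : ℕ} (x : Fin s → ℝ) : dotp (fun _ => (0:ℝ)) x = 0 := by simp [dotp]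
lemma dotp_zero_right {s : ℕ} (x : Fin s → ℝ) : dotp x (fun _ => (0:ℝ)) = 0 := by simp [dotp]
lemma dotp_zero_left' {s : ℕ} (x : Fin s → ℝ) : dotp (0 : Fin s → ℝ) x = 0 := by simp [dotp]
lemma dotp_zero_right' {s : ℕ} (x : Fin s → ℝ) : dotp x (0 : Fin s → ℝ) = 0 := by simp [dotp]

/-- Evaluation of `B2 ξ₁ U_j ξ₂ T_i`. -/
lemma B2_eval₁ {s : ℕ} (ξ₁ ξ₂ : VUT s) (i j : Fin s) :
    B2 ξ₁ ((fun m => if m = j then (1:ℝ) else 0), fun _ => 0)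
       ξ₂ ((fun _ => 0), fun m => if m = i then (1:ℝ) else 0)
    = ξ₁.1 i * ξ₂.1 j - (if i = j then 1 else 0) * dotp ξ₁.1 ξ₂.1 := by
  rcases eq_or_ne i j with h | h
  · subst h
    simp [B2, dotp_ind_left, dotp_ind_right, dotp_zero_left, dotp_zero_right, dotp_comm ξ₂.1 ξ₁.1]
  · simp [B2, dotp_ind_left, dotp_ind_right, dotp_zero_left, dotp_zero_right, h, h.symm]

/-- Evaluation of `B2 ξ₁ U_i U_j ξ₂`. -/
lemma B2_eval₂ {s : ℕ} (ξ₁ ξ₂ : VUT s) (i j : Fin s) :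
    B2 ξ₁ ((fun m => if m = i then (1:ℝ) else 0), fun _ => 0)
       ((fun m => if m = j then (1:ℝ) else 0), fun _ => 0) ξ₂
    = (if i = j then 1 else 0) * (dotp ξ₁.1 ξ₂.2 + dotp ξ₂.1 ξ₁.2)
      - ξ₁.1 j * ξ₂.2 i - ξ₁.2 j * ξ₂.1 i := by
  rcases eq_or_ne i j with h | h
  · subst h
    simp only [B2, dotp_ind_left, dotp_ind_right, dotp_zero_left, dotp_zero_right, if_pos rfl]
    ring
  · simp only [B2, dotp_ind_left, dotp_ind_right, dotp_zero_left, dotp_zero_right,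
      if_neg h, if_neg h.symm]
    ring

/-- If `f j * g i = δ_{ij} c` for all `i j` and there are two distinct indices,
then all products `f j * g i` vanish. -/
lemma prod_all_zero {s : ℕ} (hs : 2 ≤ s) (f g : Fin s → ℝ) (c : ℝ)
    (h : ∀ i j : Fin s, f j * g i = (if i = j then 1 else 0) * c) :
    ∀ i j : Fin s, f j * g i = 0 := by
  have h01 : (⟨0, by omega⟩ : Fin s) ≠ ⟨1, by omega⟩ := by
    simp [Fin.ext_iff]
  have e00 := h ⟨0, by omega⟩ ⟨0, by omega⟩
  have e11 := h ⟨1, by omega⟩ ⟨1, by omega⟩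
  have e01 := h ⟨0, by omega⟩ ⟨1, by omega⟩
  have e10 := h ⟨1, by omega⟩ ⟨0, by omega⟩
  rw [if_pos rfl, one_mul] at e00 e11
  rw [if_neg h01, zero_mul] at e01
  rw [if_neg h01.symm, zero_mul] at e10
  have hcc : c * c = 0 := by
    calc c * c = (f ⟨0, by omega⟩ * g ⟨0, by omega⟩) * (f ⟨1, by omega⟩ * g ⟨1, by omega⟩) := by
          rw [e00, e11]
      _ = (f ⟨1, by omega⟩ * g ⟨0, by omega⟩) * (f ⟨0, by omega⟩ * g ⟨1, by omega⟩) := by ring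
      _ = 0 := by rw [e01, e10, mul_zero]
  have hc : c = 0 := mul_self_eq_zero.mp hcc
  intro i j
  rw [h i j, hc, mul_zero]

/-- Lemma 4.2 (2): `(ℝ^{2s}, B)` is irreducible: there is no direct sum decomposition with
both summands nonzero and `B` vanishing whenever one argument lies in `W₁` and another in `W₂`
(the remaining arguments being arbitrary, in any positions). -/
theorem stmt3 (s : ℕ) (hs : 2 ≤ s) :
    ¬ ∃ W₁ W₂ : Submodule ℝ (VUT s), W₁ ≠ ⊥ ∧ W₂ ≠ ⊥ ∧ IsCompl W₁ W₂ ∧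
      (∀ ξ₁ ∈ W₁, ∀ ξ₂ ∈ W₂, ∀ η ζ : VUT s,
        B2 ξ₁ ξ₂ η ζ = 0 ∧ B2 ξ₁ η ξ₂ ζ = 0 ∧ B2 ξ₁ η ζ ξ₂ = 0) := by
  rintro ⟨W₁, W₂, hW₁, hW₂, hcompl, hvan⟩
  -- (A') all products of U-components between the two summands vanish
  have keyA : ∀ ξ₁ ∈ W₁, ∀ ξ₂ ∈ W₂, ∀ i j : Fin s, ξ₁.1 i * ξ₂.1 j = 0 := by
    intro ξ₁ h₁ ξ₂ h₂
    have h : ∀ i j : Fin s, ξ₁.1 j * ξ₂.1 i = (if i = j then 1 else 0) * dotp ξ₁.1 ξ₂.1 := by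
      intro i j
      have hv := (hvan ξ₁ h₁ ξ₂ h₂
        ((fun m => if m = i then (1:ℝ) else 0), fun _ => 0)
        ((fun _ => 0), fun m => if m = j then (1:ℝ) else 0)).2.1
      rw [B2_eval₁ ξ₁ ξ₂ j i] at hv
      rcases eq_or_ne i j with hij | hij
      · subst hij
        rw [if_pos rfl] at hv ⊢
        linarith
      · rw [if_neg hij.symm] at hv
        rw [if_neg hij]
        linarith
    intro i j
    exact prod_all_zero hs ξ₁.1 ξ₂.1 _ h j i
  -- (B) the mixed U-T relation
  have keyB : ∀ ξ₁ ∈ W₁, ∀ ξ₂ ∈ W₂, ∀ i j : Fin s,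
      ξ₁.1 j * ξ₂.2 i + ξ₁.2 j * ξ₂.1 i
        = (if i = j then 1 else 0) * (dotp ξ₁.1 ξ₂.2 + dotp ξ₂.1 ξ₁.2) := by
    intro ξ₁ h₁ ξ₂ h₂ i j
    have hv := (hvan ξ₁ h₁ ξ₂ h₂
      ((fun m => if m = i then (1:ℝ) else 0), fun _ => 0)
      ((fun m => if m = j then (1:ℝ) else 0), fun _ => 0)).2.2
    rw [B2_eval₂ ξ₁ ξ₂ i j] at hv
    linarith
  -- the U-components of one summand all vanish
  have hdisj : (∀ ξ₁ ∈ W₁, ξ₁.1 = 0) ∨ (∀ ξ₂ ∈ W₂, ξ₂.1 = 0) := by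
    by_cases hall : ∀ ξ₁ ∈ W₁, ξ₁.1 = 0
    · exact Or.inl hall
    · right
      push_neg at hall
      obtain ⟨ξ₁, h₁, hne⟩ := hall
      obtain ⟨i, hi⟩ := Function.ne_iff.mp hne
      intro ξ₂ h₂
      funext j
      have := keyA ξ₁ h₁ ξ₂ h₂ i j
      simp only [Pi.zero_apply] at hi ⊢
      exact (mul_eq_zero.mp this).resolve_left hi
  -- in either case, *all* U-components of both summands vanish
  have hallU : ∀ ξ ∈ W₁ ⊔ W₂, ξ.1 = 0 := by
    have main : (∀ ξ₁ ∈ W₁, ξ₁.1 = 0) ∧ (∀ ξ₂ ∈ W₂, ξ₂.1 = 0) := by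
      rcases hdisj with hz | hz
      · refine ⟨hz, ?_⟩
        obtain ⟨ξ₁, h₁, hne⟩ := Submodule.exists_mem_ne_zero_of_ne_bot hW₁
        have hu : ξ₁.1 = 0 := hz ξ₁ h₁
        have ht : ξ₁.2 ≠ 0 := fun h => hne (Prod.ext hu h)
        obtain ⟨j, hj⟩ := Function.ne_iff.mp ht
        simp only [Pi.zero_apply] at hj
        intro ξ₂ h₂
        funext i
        have hz2 : ∀ i' j' : Fin s, ξ₁.2 j' * ξ₂.1 i' = 0 := by
          apply prod_all_zero hs ξ₁.2 ξ₂.1 (dotp ξ₂.1 ξ₁.2)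
          intro i' j'
          have hB' := keyB ξ₁ h₁ ξ₂ h₂ i' j'
          rw [hu, dotp_zero_left'] at hB'
          simp only [Pi.zero_apply, zero_mul, zero_add] at hB'
          exact hB'
        have := hz2 i j
        simp only [Pi.zero_apply]
        exact (mul_eq_zero.mp this).resolve_left hj
      · refine ⟨?_, hz⟩
        obtain ⟨ξ₂, h₂, hne⟩ := Submodule.exists_mem_ne_zero_of_ne_bot hW₂
        have hu : ξ₂.1 = 0 := hz ξ₂ h₂
        have ht : ξ₂.2 ≠ 0 := fun h => hne (Prod.ext hu h)
        obtain ⟨i, hi⟩ := Function.ne_iff.mp ht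
        simp only [Pi.zero_apply] at hi
        intro ξ₁ h₁
        funext j
        have hz2 : ∀ i' j' : Fin s, ξ₁.1 j' * ξ₂.2 i' = 0 := by
          apply prod_all_zero hs ξ₁.1 ξ₂.2 (dotp ξ₁.1 ξ₂.2)
          intro i' j'
          have hB' := keyB ξ₁ h₁ ξ₂ h₂ i' j'
          rw [hu, dotp_zero_left'] at hB'
          simp only [Pi.zero_apply, mul_zero, add_zero] at hB'
          exact hB'
        have := hz2 i j
        simp only [Pi.zero_apply]
        exact (mul_eq_zero.mp this).resolve_right hi
    intro ξ hξ
    obtain ⟨a, ha, b, hb, hab⟩ := Submodule.mem_sup.mp hξ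
    have hx : ξ.1 = a.1 + b.1 := by rw [← hab]; rfl
    rw [hx, main.1 a ha, main.2 b hb, add_zero]
  -- contradiction: the vector (e₀, 0) is in W₁ ⊔ W₂ but has nonzero U-part
  have htop : W₁ ⊔ W₂ = ⊤ := hcompl.sup_eq_top
  have hmem : ((fun m => if m = (⟨0, by omega⟩ : Fin s) then (1:ℝ) else 0, fun _ => 0) : VUT s)
      ∈ W₁ ⊔ W₂ := by rw [htop]; trivial
  have := congrFun (hallU _ hmem) ⟨0, by omega⟩
  simp at this
end

section
/- Let V be a real vector space of dimension at least 3 and let φ₁, φ₂ be symmetric positive definite bilinear forms on V. Define R(φ)(x,y,z,w) := φ(x,w)φ(y,z) - φ(x,z)φ(y,w). If R(φ₁) = R(φ₂) as 4-tensors, then φ₁ = φ₂. -/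
/-- Auxiliary kernel fact: the kernel of a linear functional on a space of rank
at least 3 has rank at least 2. -/
theorem stmt4_ker_rank (V : Type*) [AddCommGroup V] [Module ℝ V]
    (hdim : 3 ≤ Module.rank ℝ V) (f : V →ₗ[ℝ] ℝ) :
    ((2 : ℕ) : Cardinal) ≤ Module.rank ℝ (LinearMap.ker f) := by
  have h1 := LinearMap.lift_rank_range_add_rank_ker f
  rw [Cardinal.lift_uzero, Cardinal.lift_uzero] at h1
  have h4 : (3 : Cardinal) ≤ 1 + Module.rank ℝ (LinearMap.ker f) := by
    refine hdim.trans ?_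
    rw [← h1]
    refine add_le_add ?_ le_rfl
    have h' : Module.rank ℝ (LinearMap.range f) ≤ 1 := by
      simpa [Module.rank_self] using Submodule.rank_le (LinearMap.range f)
    exact le_trans (Cardinal.lift_le.mpr h') (by simp)
  have h5 : (2 : Cardinal) + 1 ≤ Module.rank ℝ (LinearMap.ker f) + 1 := by
    rw [add_comm 1] at h4
    exact le_trans (by norm_num) h4
  exact_mod_cast Cardinal.add_one_le_add_one_iff.mp h5

/-- Auxiliary algebra: the Gram data of two positive definite forms on an
orthogonal (for the first form) triple, subject to the curvature relations,
forces the `x`-diagonal entries to agree. -/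
theorem stmt4_alg (α β γ a b c p q r : ℝ)
    (hα0 : 0 < α) (hβ0 : 0 < β) (hγ0 : 0 < γ)
    (ha0 : 0 < a) (hb0 : 0 < b) (hc0 : 0 < c)
    (eR1 : a * r - q * p = 0) (eR2 : b * q - r * p = 0) (eR3 : c * p - r * q = 0)
    (eE1 : α * β = a * b - p * p) (eE2 : α * γ = a * c - q * q)
    (eE3 : β * γ = b * c - r * r) : a = α := by
  have hqr : q * r = 0 := by
    have h2 : α * β * (q * r) = 0 := by
      linear_combination (q * r) * eE1 + (b * q) * eR1 + (q * p) * eR2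
    rcases mul_eq_zero.mp h2 with h | h
    · exact absurd h (by positivity)
    · exact h
  have hpr : p * r = 0 := by
    have h2 : α * γ * (p * r) = 0 := by
      linear_combination (p * r) * eE2 + (c * p) * eR1 + (p * q) * eR3
    rcases mul_eq_zero.mp h2 with h | h
    · exact absurd h (by positivity)
    · exact h
  have hpq : p * q = 0 := by
    have h2 : β * γ * (p * q) = 0 := by
      linear_combination (p * q) * eE3 + (c * p) * eR2 + (p * r) * eR3
    rcases mul_eq_zero.mp h2 with h | h
    · exact absurd h (by positivity)
    · exact h
  have hr0 : r = 0 := by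
    have h : a * r = 0 := by linear_combination eR1 + hpq
    exact (mul_eq_zero.mp h).resolve_left (ne_of_gt ha0)
  have hq0 : q = 0 := by
    have h : b * q = 0 := by linear_combination eR2 + hpr
    exact (mul_eq_zero.mp h).resolve_left (ne_of_gt hb0)
  have hp0 : p = 0 := by
    have h : c * p = 0 := by linear_combination eR3 + hqr
    exact (mul_eq_zero.mp h).resolve_left (ne_of_gt hc0)
  subst hp0 hq0 hr0
  have key2 : a * a * (β * γ) = α * α * (β * γ) := by
    linear_combination (a * a) * eE3 - (a * c) * eE1 - (α * β) * eE2
  have h6 : a * a = α * α := mul_right_cancel₀ (by positivity) key2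
  have h7 : (a - α) * (a + α) = 0 := by linear_combination h6
  rcases mul_eq_zero.mp h7 with h | h
  · linarith
  · linarith

/-- Lemma 5.1: two symmetric positive definite bilinear forms on a real vector space of
dimension at least 3 inducing the same algebraic curvature tensor
`R(φ)(x,y,z,w) = φ(x,w)φ(y,z) - φ(x,z)φ(y,w)` are equal. -/
theorem stmt4 (V : Type*) [AddCommGroup V] [Module ℝ V]
    (hdim : 3 ≤ Module.rank ℝ V)
    (φ₁ φ₂ : V →ₗ[ℝ] V →ₗ[ℝ] ℝ)
    (hsym₁ : ∀ x y, φ₁ x y = φ₁ y x) (hsym₂ : ∀ x y, φ₂ x y = φ₂ y x)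
    (hpd₁ : ∀ x, x ≠ 0 → 0 < φ₁ x x) (hpd₂ : ∀ x, x ≠ 0 → 0 < φ₂ x x)
    (hR : ∀ x y z w, φ₁ x w * φ₁ y z - φ₁ x z * φ₁ y w
                   = φ₂ x w * φ₂ y z - φ₂ x z * φ₂ y w) :
    φ₁ = φ₂ := by
  have key : ∀ x : V, φ₁ x x = φ₂ x x := by
    intro x
    rcases eq_or_ne x 0 with rfl | hx
    · simp
    obtain ⟨g, hg⟩ := exists_linearIndependent_of_le_rank (stmt4_ker_rank V hdim (φ₁ x))
    have hind : LinearIndependent ℝ ((LinearMap.ker (φ₁ x)).subtype ∘ g) :=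
      hg.map' _ (Submodule.ker_subtype _)
    have hy0 : (g 0 : V) ≠ 0 := hind.ne_zero 0
    have hxy : φ₁ x (g 0 : V) = 0 := (g 0).2
    have hxz' : φ₁ x (g 1 : V) = 0 := (g 1).2
    have hyy : 0 < φ₁ (g 0 : V) (g 0 : V) := hpd₁ _ hy0
    obtain ⟨y, hydef⟩ : ∃ y : V, y = (g 0 : V) := ⟨_, rfl⟩
    obtain ⟨z, hzdef⟩ : ∃ z : V,
        z = (g 1 : V) - (φ₁ (g 0 : V) (g 1 : V) / φ₁ (g 0 : V) (g 0 : V)) • (g 0 : V) :=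
      ⟨_, rfl⟩
    have hy0' : y ≠ 0 := by rw [hydef]; exact hy0
    have hz0 : z ≠ 0 := by
      intro h
      have hli := Fintype.linearIndependent_iff.mp hind
      have h4 : (g 1 : V) - (φ₁ (g 0 : V) (g 1 : V) / φ₁ (g 0 : V) (g 0 : V)) • (g 0 : V)
          = 0 := by rw [← hzdef, h]
      have h2 : (g 1 : V) = (φ₁ (g 0 : V) (g 1 : V) / φ₁ (g 0 : V) (g 0 : V)) • (g 0 : V) :=
        sub_eq_zero.mp h4
      have h3 := hli ![-(φ₁ (g 0 : V) (g 1 : V) / φ₁ (g 0 : V) (g 0 : V)), 1] (by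
        rw [Fin.sum_univ_two]
        simp only [Matrix.cons_val_zero, Matrix.cons_val_one, Matrix.head_cons,
          Function.comp_apply, Submodule.coe_subtype]
        rw [show (-(φ₁ (g 0 : V) (g 1 : V) / φ₁ (g 0 : V) (g 0 : V))) • (g 0 : V)
            + (1 : ℝ) • (g 1 : V)
          = (g 1 : V) - (φ₁ (g 0 : V) (g 1 : V) / φ₁ (g 0 : V) (g 0 : V)) • (g 0 : V) from by
            module]
        exact h4) 1
      simp at h3
    have hxy2 : φ₁ x y = 0 := by rw [hydef]; exact hxy
    have hxz : φ₁ x z = 0 := by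
      rw [hzdef, map_sub, map_smul]
      rw [hxy, hxz']
      simp
    have hyz : φ₁ y z = 0 := by
      rw [hydef, hzdef, map_sub, map_smul]
      have : φ₁ (g 0 : V) (g 0 : V) ≠ 0 := ne_of_gt hyy
      field_simp
      rw [smul_eq_mul, div_mul_cancel₀ _ this, sub_self]
    have hyx : φ₁ y x = 0 := (hsym₁ y x).trans hxy2
    have hzx : φ₁ z x = 0 := (hsym₁ z x).trans hxz
    have hzy : φ₁ z y = 0 := (hsym₁ z y).trans ((hsym₁ y z).symm ▸ hyz)
    refine (stmt4_alg (φ₁ x x) (φ₁ y y) (φ₁ z z) (φ₂ x x) (φ₂ y y) (φ₂ z z)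
      (φ₂ x y) (φ₂ x z) (φ₂ y z)
      (hpd₁ x hx) (hpd₁ y hy0') (hpd₁ z hz0)
      (hpd₂ x hx) (hpd₂ y hy0') (hpd₂ z hz0) ?_ ?_ ?_ ?_ ?_ ?_).symm
    · have h := hR x y z x
      rw [hyz, hxz, hsym₂ y x] at h
      linear_combination -h
    · have h := hR y x z y
      rw [hxz, hyz] at h
      linear_combination -h
    · have h := hR z x y z
      rw [hxy2, hzy, hsym₂ z y] at h
      linear_combination -h
    · have h := hR x y y x
      rw [hxy2, hsym₂ y x] at h
      linear_combination h
    · have h := hR x z z x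
      rw [hxz, hsym₂ z x] at h
      linear_combination h
    · have h := hR y z z y
      rw [hyz, hsym₂ z y] at h
      linear_combination h
  refine LinearMap.ext fun u => LinearMap.ext fun v => ?_
  have h1 := key (u + v)
  have h2 := key u
  have h3 := key v
  simp only [map_add, LinearMap.add_apply] at h1
  have hs1 := hsym₁ u v
  have hs2 := hsym₂ u v
  linarith
end

section
/- Consider the metric g on ℝ^{2p} with coordinates (x_1,...,x_p,y_1,...,y_p) defined by g(∂_i^x,∂_j^x) = ∂_i f · ∂_j f and g(∂_i^x,∂_i^y) = 1 (other components zero), for f a smooth function of (x_1,...,x_p). Then the only nonzero components of the curvature tensor are R(∂_i^x,∂_j^x,∂_k^x,∂_l^x) = H_{il}H_{jk} - H_{ik}H_{jl}, where H_{ij} = ∂_i∂_j f is the Hessian of f. -/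
section CoordinateGeometry

variable {ι : Type*} [Fintype ι] [DecidableEq ι]

/-- The partial derivative `∂_a h` of a function `h` on `ℝ^ι`. -/
noncomputable def pd (a : ι) (h : (ι → ℝ) → ℝ) (z : ι → ℝ) : ℝ :=
  fderiv ℝ h z (Pi.single a 1)

/-- The Christoffel symbol of the first kind
`Γ_{abc} = (∂_a g_{bc} + ∂_b g_{ac} - ∂_c g_{ab})/2`. -/
noncomputable def christoffelFst (g : (ι → ℝ) → Matrix ι ι ℝ) (a b c : ι) (z : ι → ℝ) : ℝ :=
  (pd a (fun w => g w b c) z + pd b (fun w => g w a c) z - pd c (fun w => g w a b) z) / 2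

/-- The Christoffel symbol of the second kind `Γ_{ab}^c = Σ_d g^{cd} Γ_{abd}`. -/
noncomputable def christoffelSnd (g : (ι → ℝ) → Matrix ι ι ℝ) (a b c : ι) (z : ι → ℝ) : ℝ :=
  ∑ d, (g z)⁻¹ c d * christoffelFst g a b d z

/-- The curvature operator components: `curvU g a b c e` is the `e`-component of
`R(∂_a,∂_b)∂_c = (∇_{∂_a}∇_{∂_b} - ∇_{∂_b}∇_{∂_a})∂_c`. -/
noncomputable def curvU (g : (ι → ℝ) → Matrix ι ι ℝ) (a b c e : ι) (z : ι → ℝ) : ℝ :=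
  pd a (christoffelSnd g b c e) z - pd b (christoffelSnd g a c e) z
    + ∑ f, (christoffelSnd g b c f z * christoffelSnd g a f e z
          - christoffelSnd g a c f z * christoffelSnd g b f e z)

/-- The Riemann curvature tensor `R(∂_a,∂_b,∂_c,∂_d) = g(R(∂_a,∂_b)∂_c, ∂_d)`. -/
noncomputable def curv (g : (ι → ℝ) → Matrix ι ι ℝ) (a b c d : ι) (z : ι → ℝ) : ℝ :=
  ∑ e, curvU g a b c e z * g z e d

/-- The covariant derivative `∇R(∂_a,∂_b,∂_c,∂_d;∂_e)` of the curvature tensor. -/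
noncomputable def curvCov (g : (ι → ℝ) → Matrix ι ι ℝ) (a b c d e : ι) (z : ι → ℝ) : ℝ :=
  pd e (curv g a b c d) z
  - ∑ f, christoffelSnd g e a f z * curv g f b c d z
  - ∑ f, christoffelSnd g e b f z * curv g a f c d z
  - ∑ f, christoffelSnd g e c f z * curv g a b f d z
  - ∑ f, christoffelSnd g e d f z * curv g a b c f z

end CoordinateGeometry

/-- The metric `g_{1,p,f}` on `ℝ^{2p}` (with `Sum.inl i` the coordinate `x_i` and
`Sum.inr i` the coordinate `y_i`): `g(∂_i^x,∂_j^x) = ∂_i f · ∂_j f`, `g(∂_i^x,∂_i^y) = 1`. -/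
noncomputable def metric1 (p : ℕ) (f : (Fin p → ℝ) → ℝ) :
    ((Fin p ⊕ Fin p) → ℝ) → Matrix (Fin p ⊕ Fin p) (Fin p ⊕ Fin p) ℝ :=
  fun z => Matrix.of fun a b =>
    match a, b with
    | Sum.inl i, Sum.inl j =>
        pd i f (fun k => z (Sum.inl k)) * pd j f (fun k => z (Sum.inl k))
    | Sum.inl i, Sum.inr j => if i = j then 1 else 0
    | Sum.inr i, Sum.inl j => if i = j then 1 else 0
    | Sum.inr _, Sum.inr _ => 0

namespace Stmt6Aux

open Sum

section Gen

variable {ι : Type*} [Fintype ι] [DecidableEq ι]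

lemma pd_const (a : ι) (c : ℝ) (z : ι → ℝ) : pd a (fun _ => c) z = 0 := by
  simp [pd]

lemma pd_mul {h₁ h₂ : (ι → ℝ) → ℝ} (a : ι) (z : ι → ℝ)
    (H₁ : DifferentiableAt ℝ h₁ z) (H₂ : DifferentiableAt ℝ h₂ z) :
    pd a (fun x => h₁ x * h₂ x) z = pd a h₁ z * h₂ z + h₁ z * pd a h₂ z := by
  simp only [pd, fderiv_fun_mul H₁ H₂]
  simp
  ring

lemma contDiff_pd {h : (ι → ℝ) → ℝ} (hh : ContDiff ℝ (⊤:ℕ∞) h) (a : ι) :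
    ContDiff ℝ (⊤:ℕ∞) (pd a h) :=
  (hh.fderiv_right (by exact_mod_cast le_top)).clm_apply contDiff_const

lemma pd_symm {h : (ι → ℝ) → ℝ} (hh : ContDiff ℝ (⊤:ℕ∞) h) (a b : ι) (z : ι → ℝ) :
    pd a (pd b h) z = pd b (pd a h) z := by
  have hd : ContDiff ℝ (⊤:ℕ∞) (fderiv ℝ h) := hh.fderiv_right (by exact_mod_cast le_top)
  have key : ∀ v w : ι → ℝ,
      fderiv ℝ (fun y => fderiv ℝ h y w) z v = fderiv ℝ (fderiv ℝ h) z v w := by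
    intro v w
    rw [fderiv_clm_apply (hd.differentiable (by simp) z)
      (differentiableAt_const w)]
    simp
  have symm := second_derivative_symmetric
    (f := h) (f' := fderiv ℝ h) (f'' := fderiv ℝ (fderiv ℝ h) z)
    (fun y => (hh.differentiable (by simp) y).hasFDerivAt)
    ((hd.differentiable (by simp) z).hasFDerivAt)
  show fderiv ℝ (fun y => fderiv ℝ h y (Pi.single b 1)) z (Pi.single a 1)
      = fderiv ℝ (fun y => fderiv ℝ h y (Pi.single a 1)) z (Pi.single b 1)
  rw [key, key, symm]

end Gen

section P

variable {p : ℕ}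

/-- Projection onto the `x` coordinates, as a continuous linear map. -/
noncomputable def L (p : ℕ) : ((Fin p ⊕ Fin p) → ℝ) →L[ℝ] (Fin p → ℝ) :=
  ContinuousLinearMap.pi (fun k => ContinuousLinearMap.proj (Sum.inl k))

lemma L_apply (z : (Fin p ⊕ Fin p) → ℝ) : L p z = fun k => z (Sum.inl k) := rfl

lemma L_single_inl (i : Fin p) :
    L p (Pi.single (Sum.inl i : Fin p ⊕ Fin p) 1) = Pi.single i 1 := by
  funext k
  simp [L, Pi.single_apply]

lemma L_single_inr (i : Fin p) :
    L p (Pi.single (Sum.inr i : Fin p ⊕ Fin p) 1) = 0 := by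
  funext k
  simp [L, Pi.single_apply]

lemma pd_comp {h : (Fin p → ℝ) → ℝ} {z : (Fin p ⊕ Fin p) → ℝ}
    (hh : DifferentiableAt ℝ h (L p z)) (a : Fin p ⊕ Fin p) :
    pd a (fun w => h (L p w)) z = fderiv ℝ h (L p z) (L p (Pi.single a 1)) := by
  have : (fun w => h (L p w)) = h ∘ (L p) := rfl
  rw [pd, this, fderiv_comp z hh (L p).differentiableAt, (L p).fderiv]
  rfl

lemma pd_comp_inl {h : (Fin p → ℝ) → ℝ} {z : (Fin p ⊕ Fin p) → ℝ}
    (hh : DifferentiableAt ℝ h (L p z)) (i : Fin p) :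
    pd (Sum.inl i : Fin p ⊕ Fin p) (fun w => h (L p w)) z = pd i h (L p z) := by
  rw [pd_comp hh, L_single_inl]; rfl

lemma pd_comp_inr {h : (Fin p → ℝ) → ℝ} {z : (Fin p ⊕ Fin p) → ℝ}
    (hh : DifferentiableAt ℝ h (L p z)) (i : Fin p) :
    pd (Sum.inr i : Fin p ⊕ Fin p) (fun w => h (L p w)) z = 0 := by
  rw [pd_comp hh, L_single_inr, map_zero]


variable {p : ℕ} {f : (Fin p → ℝ) → ℝ}

/-- `pd` of metric entries. -/
lemma pd_g (hf : ContDiff ℝ (⊤:ℕ∞) f) (i j : Fin p) (a : Fin p ⊕ Fin p)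
    (z : (Fin p ⊕ Fin p) → ℝ) :
    pd a (fun w => metric1 p f w (Sum.inl i) (Sum.inl j)) z =
      (match a with
       | Sum.inl k => pd k (pd i f) (L p z) * pd j f (L p z)
            + pd i f (L p z) * pd k (pd j f) (L p z)
       | Sum.inr _ => 0) := by
  have hdi : DifferentiableAt ℝ (pd i f) (L p z) :=
    (contDiff_pd hf i).differentiable (by simp) _
  have hdj : DifferentiableAt ℝ (pd j f) (L p z) :=
    (contDiff_pd hf j).differentiable (by simp) _
  have heq : (fun w => metric1 p f w (Sum.inl i) (Sum.inl j))
      = (fun w => (fun x => pd i f x * pd j f x) (L p w)) := rfl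
  rw [heq]
  rcases a with k | k
  · rw [pd_comp_inl (h := fun x => pd i f x * pd j f x) (hdi.mul hdj) k, pd_mul k _ hdi hdj]
  · rw [pd_comp_inr (h := fun x => pd i f x * pd j f x) (hdi.mul hdj) k]

lemma pd_g_const_lr (i j : Fin p) (a : Fin p ⊕ Fin p) (z : (Fin p ⊕ Fin p) → ℝ) :
    pd a (fun w => metric1 p f w (Sum.inl i) (Sum.inr j)) z = 0 := by
  have heq : (fun w => metric1 p f w (Sum.inl i) (Sum.inr j))
      = (fun _ => if i = j then (1:ℝ) else 0) := rfl
  rw [heq, pd_const]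

lemma pd_g_const_rl (i j : Fin p) (a : Fin p ⊕ Fin p) (z : (Fin p ⊕ Fin p) → ℝ) :
    pd a (fun w => metric1 p f w (Sum.inr i) (Sum.inl j)) z = 0 := by
  have heq : (fun w => metric1 p f w (Sum.inr i) (Sum.inl j))
      = (fun _ => if i = j then (1:ℝ) else 0) := rfl
  rw [heq, pd_const]

lemma pd_g_const_rr (i j : Fin p) (a : Fin p ⊕ Fin p) (z : (Fin p ⊕ Fin p) → ℝ) :
    pd a (fun w => metric1 p f w (Sum.inr i) (Sum.inr j)) z = 0 := by
  have heq : (fun w => metric1 p f w (Sum.inr i) (Sum.inr j)) = (fun _ => (0:ℝ)) := rfl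
  rw [heq, pd_const]

lemma cf_lll (hf : ContDiff ℝ (⊤:ℕ∞) f) (i j k : Fin p) (z : (Fin p ⊕ Fin p) → ℝ) :
    christoffelFst (metric1 p f) (Sum.inl i) (Sum.inl j) (Sum.inl k) z =
      pd i (pd j f) (L p z) * pd k f (L p z) := by
  rw [christoffelFst, pd_g hf, pd_g hf, pd_g hf]
  simp only
  rw [pd_symm hf j i, pd_symm hf k i, pd_symm hf k j]
  ring

lemma cf_zero (hf : ContDiff ℝ (⊤:ℕ∞) f) (a b c : Fin p ⊕ Fin p)
    (h : a.isRight ∨ b.isRight ∨ c.isRight) (z : (Fin p ⊕ Fin p) → ℝ) :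
    christoffelFst (metric1 p f) a b c z = 0 := by
  rcases a with i | i <;> rcases b with j | j <;> rcases c with k | k <;>
    simp_all [christoffelFst, pd_g hf, pd_g_const_lr, pd_g_const_rl, pd_g_const_rr]


/-- The explicit inverse of `metric1`. -/
noncomputable def ginv (p : ℕ) (f : (Fin p → ℝ) → ℝ) (z : (Fin p ⊕ Fin p) → ℝ) :
    Matrix (Fin p ⊕ Fin p) (Fin p ⊕ Fin p) ℝ :=
  Matrix.of fun a b =>
    match a, b with
    | Sum.inl _, Sum.inl _ => 0
    | Sum.inl i, Sum.inr j => if i = j then 1 else 0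
    | Sum.inr i, Sum.inl j => if i = j then 1 else 0
    | Sum.inr i, Sum.inr j => -(pd i f (L p z) * pd j f (L p z))

lemma metric1_inv (z : (Fin p ⊕ Fin p) → ℝ) :
    (metric1 p f z)⁻¹ = ginv p f z := by
  apply Matrix.inv_eq_right_inv
  ext a b
  rcases a with i | i <;> rcases b with j | j <;>
    simp [Matrix.mul_apply, Fintype.sum_sum_type, metric1, ginv, Matrix.one_apply,
      L_apply, mul_comm, Finset.sum_ite_eq, Finset.sum_ite_eq']

lemma cs_llr (hf : ContDiff ℝ (⊤:ℕ∞) f) (i j m : Fin p) (z : (Fin p ⊕ Fin p) → ℝ) :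
    christoffelSnd (metric1 p f) (Sum.inl i) (Sum.inl j) (Sum.inr m) z =
      pd i (pd j f) (L p z) * pd m f (L p z) := by
  rw [christoffelSnd, metric1_inv, Fintype.sum_sum_type]
  have h2 : ∀ l : Fin p,
      ginv p f z (Sum.inr m) (Sum.inr l)
        * christoffelFst (metric1 p f) (Sum.inl i) (Sum.inl j) (Sum.inr l) z = 0 := by
    intro l
    rw [cf_zero hf _ _ _ (by simp)]
    ring
  simp only [h2, Finset.sum_const_zero, add_zero]
  have h1 : ∀ l : Fin p,
      ginv p f z (Sum.inr m) (Sum.inl l)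
        * christoffelFst (metric1 p f) (Sum.inl i) (Sum.inl j) (Sum.inl l) z =
      (if m = l then (1:ℝ) else 0) * (pd i (pd j f) (L p z) * pd l f (L p z)) := by
    intro l
    rw [cf_lll hf]
    rfl
  simp only [h1]
  simp [Finset.sum_ite_eq]

lemma cs_zero (hf : ContDiff ℝ (⊤:ℕ∞) f) (a b c : Fin p ⊕ Fin p)
    (h : a.isRight ∨ b.isRight ∨ c.isLeft) (z : (Fin p ⊕ Fin p) → ℝ) :
    christoffelSnd (metric1 p f) a b c z = 0 := by
  rw [christoffelSnd, metric1_inv, Fintype.sum_sum_type]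
  rcases h with h | h | h
  · have : ∀ d, christoffelFst (metric1 p f) a b d z = 0 :=
      fun d => cf_zero hf _ _ _ (Or.inl h) z
    simp [this]
  · have : ∀ d, christoffelFst (metric1 p f) a b d z = 0 :=
      fun d => cf_zero hf _ _ _ (Or.inr (Or.inl h)) z
    simp [this]
  · obtain ⟨m, rfl⟩ : ∃ m, c = Sum.inl m := by
      rcases c with m | m
      · exact ⟨m, rfl⟩
      · simp at h
    have h1 : ∀ l : Fin p, ginv p f z (Sum.inl m) (Sum.inl l) = 0 := fun l => rfl
    have h2 : ∀ l : Fin p,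
        christoffelFst (metric1 p f) a b (Sum.inr l) z = 0 :=
      fun l => cf_zero hf _ _ _ (by simp) z
    simp [h1, h2]


lemma quad_zero (hf : ContDiff ℝ (⊤:ℕ∞) f) (a b c e F : Fin p ⊕ Fin p)
    (z : (Fin p ⊕ Fin p) → ℝ) :
    christoffelSnd (metric1 p f) b c F z * christoffelSnd (metric1 p f) a F e z = 0 := by
  rcases F with l | l
  · rw [cs_zero hf b c _ (by simp), zero_mul]
  · rw [cs_zero hf a _ e (by simp), mul_zero]

lemma pd_cs_zero (hf : ContDiff ℝ (⊤:ℕ∞) f) (a b c e : Fin p ⊕ Fin p)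
    (h : b.isRight ∨ c.isRight ∨ e.isLeft) (z : (Fin p ⊕ Fin p) → ℝ) :
    pd a (christoffelSnd (metric1 p f) b c e) z = 0 := by
  have heq : christoffelSnd (metric1 p f) b c e = fun _ => (0:ℝ) :=
    funext fun w => cs_zero hf b c e h w
  rw [heq, pd_const]

lemma pd_cs_llr (hf : ContDiff ℝ (⊤:ℕ∞) f) (i j m : Fin p) (a : Fin p ⊕ Fin p)
    (z : (Fin p ⊕ Fin p) → ℝ) :
    pd a (christoffelSnd (metric1 p f) (Sum.inl i) (Sum.inl j) (Sum.inr m)) z =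
      (match a with
       | Sum.inl k => pd k (pd i (pd j f)) (L p z) * pd m f (L p z)
            + pd i (pd j f) (L p z) * pd k (pd m f) (L p z)
       | Sum.inr _ => 0) := by
  have heq : christoffelSnd (metric1 p f) (Sum.inl i) (Sum.inl j) (Sum.inr m)
      = fun w => (fun x => pd i (pd j f) x * pd m f x) (L p w) :=
    funext fun w => cs_llr hf i j m w
  have h1 : DifferentiableAt ℝ (pd i (pd j f)) (L p z) :=
    (contDiff_pd (contDiff_pd hf j) i).differentiable (by simp) _
  have h2 : DifferentiableAt ℝ (pd m f) (L p z) :=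
    (contDiff_pd hf m).differentiable (by simp) _
  rw [heq]
  rcases a with k | k
  · rw [pd_comp_inl (h := fun x => pd i (pd j f) x * pd m f x) (h1.mul h2) k, pd_mul k _ h1 h2]
  · rw [pd_comp_inr (h := fun x => pd i (pd j f) x * pd m f x) (h1.mul h2) k]

lemma curvU_lllr (hf : ContDiff ℝ (⊤:ℕ∞) f) (i j k m : Fin p)
    (z : (Fin p ⊕ Fin p) → ℝ) :
    curvU (metric1 p f) (Sum.inl i) (Sum.inl j) (Sum.inl k) (Sum.inr m) z =
      pd j (pd k f) (L p z) * pd i (pd m f) (L p z)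
        - pd i (pd k f) (L p z) * pd j (pd m f) (L p z) := by
  rw [curvU]
  have hq : ∀ F, christoffelSnd (metric1 p f) (Sum.inl j) (Sum.inl k) F z
        * christoffelSnd (metric1 p f) (Sum.inl i) F (Sum.inr m) z
      - christoffelSnd (metric1 p f) (Sum.inl i) (Sum.inl k) F z
        * christoffelSnd (metric1 p f) (Sum.inl j) F (Sum.inr m) z = 0 := by
    intro F
    rw [quad_zero hf, quad_zero hf, sub_zero]
  simp only [hq, Finset.sum_const_zero, add_zero]
  rw [pd_cs_llr hf, pd_cs_llr hf]
  simp only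
  rw [pd_symm (contDiff_pd hf k) j i]
  ring

lemma curvU_zero (hf : ContDiff ℝ (⊤:ℕ∞) f) (a b c e : Fin p ⊕ Fin p)
    (h : e.isLeft ∨ a.isRight ∨ b.isRight ∨ c.isRight)
    (z : (Fin p ⊕ Fin p) → ℝ) :
    curvU (metric1 p f) a b c e z = 0 := by
  rw [curvU]
  have hq : ∀ F, christoffelSnd (metric1 p f) b c F z
        * christoffelSnd (metric1 p f) a F e z
      - christoffelSnd (metric1 p f) a c F z
        * christoffelSnd (metric1 p f) b F e z = 0 := by
    intro F
    rw [quad_zero hf, quad_zero hf, sub_zero]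
  simp only [hq, Finset.sum_const_zero, add_zero]
  have hA : pd a (christoffelSnd (metric1 p f) b c e) z = 0 := by
    rcases e with n | n
    · exact pd_cs_zero hf a b c _ (by simp) z
    rcases b with n' | n'
    rotate_left
    · exact pd_cs_zero hf a _ c _ (by simp) z
    rcases c with n'' | n''
    rotate_left
    · exact pd_cs_zero hf a _ _ _ (by simp) z
    obtain ⟨r, rfl⟩ : ∃ r, a = Sum.inr r := by
      rcases a with r | r
      · simp at h
      · exact ⟨r, rfl⟩
    rw [pd_cs_llr hf]
  have hB : pd b (christoffelSnd (metric1 p f) a c e) z = 0 := by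
    rcases e with n | n
    · exact pd_cs_zero hf b a c _ (by simp) z
    rcases a with n' | n'
    rotate_left
    · exact pd_cs_zero hf b _ c _ (by simp) z
    rcases c with n'' | n''
    rotate_left
    · exact pd_cs_zero hf b _ _ _ (by simp) z
    obtain ⟨r, rfl⟩ : ∃ r, b = Sum.inr r := by
      rcases b with r | r
      · simp at h
      · exact ⟨r, rfl⟩
    rw [pd_cs_llr hf]
  rw [hA, hB, sub_zero]

lemma curv_llll (hf : ContDiff ℝ (⊤:ℕ∞) f) (i j k l : Fin p)
    (z : (Fin p ⊕ Fin p) → ℝ) :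
    curv (metric1 p f) (Sum.inl i) (Sum.inl j) (Sum.inl k) (Sum.inl l) z =
      pd i (pd l f) (L p z) * pd j (pd k f) (L p z)
        - pd i (pd k f) (L p z) * pd j (pd l f) (L p z) := by
  rw [curv, Fintype.sum_sum_type]
  have h1 : ∀ n : Fin p,
      curvU (metric1 p f) (Sum.inl i) (Sum.inl j) (Sum.inl k) (Sum.inl n) z
        * metric1 p f z (Sum.inl n) (Sum.inl l) = 0 := by
    intro n
    rw [curvU_zero hf _ _ _ _ (by simp), zero_mul]
  simp only [h1, Finset.sum_const_zero, zero_add]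
  have h2 : ∀ n : Fin p,
      curvU (metric1 p f) (Sum.inl i) (Sum.inl j) (Sum.inl k) (Sum.inr n) z
        * metric1 p f z (Sum.inr n) (Sum.inl l) =
      (pd j (pd k f) (L p z) * pd i (pd n f) (L p z)
        - pd i (pd k f) (L p z) * pd j (pd n f) (L p z))
        * (if n = l then (1:ℝ) else 0) := by
    intro n
    rw [curvU_lllr hf]
    rfl
  simp only [h2]
  simp only [mul_ite, mul_one, mul_zero, Finset.sum_ite_eq', Finset.mem_univ, if_true]
  ring

lemma curv_zero (hf : ContDiff ℝ (⊤:ℕ∞) f) (a b c d : Fin p ⊕ Fin p)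
    (h : a.isRight ∨ b.isRight ∨ c.isRight ∨ d.isRight)
    (z : (Fin p ⊕ Fin p) → ℝ) :
    curv (metric1 p f) a b c d z = 0 := by
  rw [curv, Fintype.sum_sum_type]
  rcases h with h | h | h | h
  · have : ∀ e, curvU (metric1 p f) a b c e z = 0 :=
      fun e => curvU_zero hf a b c e (by simp [h]) z
    simp [this]
  · have : ∀ e, curvU (metric1 p f) a b c e z = 0 :=
      fun e => curvU_zero hf a b c e (by simp [h]) z
    simp [this]
  · have : ∀ e, curvU (metric1 p f) a b c e z = 0 :=
      fun e => curvU_zero hf a b c e (by simp [h]) z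
    simp [this]
  · obtain ⟨r, rfl⟩ : ∃ r, d = Sum.inr r := by
      rcases d with r | r
      · simp at h
      · exact ⟨r, rfl⟩
    have h1 : ∀ n : Fin p,
        curvU (metric1 p f) a b c (Sum.inl n) z * metric1 p f z (Sum.inl n) (Sum.inr r)
          = 0 := by
      intro n
      rw [curvU_zero hf _ _ _ _ (by simp), zero_mul]
    have h2 : ∀ n : Fin p,
        curvU (metric1 p f) a b c (Sum.inr n) z * metric1 p f z (Sum.inr n) (Sum.inr r)
          = 0 := by
      intro n
      have : metric1 p f z (Sum.inr n) (Sum.inr r) = 0 := rfl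
      rw [this, mul_zero]
    simp [h1, h2]

end P

end Stmt6Aux

/-- Theorem 1.3 (3): the only nonzero components of the curvature tensor of `g_{1,p,f}` are
`R(∂_i^x,∂_j^x,∂_k^x,∂_l^x) = H_{il}H_{jk} - H_{ik}H_{jl}`, with `H` the Hessian of `f`;
every component involving a `∂^y` direction vanishes. -/
theorem stmt6 (p : ℕ) (f : (Fin p → ℝ) → ℝ) (hf : ContDiff ℝ (⊤ : ℕ∞) f) :
    ∀ z : (Fin p ⊕ Fin p) → ℝ,
      (∀ i j k l : Fin p,
        curv (metric1 p f) (Sum.inl i) (Sum.inl j) (Sum.inl k) (Sum.inl l) z =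
          pd i (pd l f) (fun m => z (Sum.inl m)) * pd j (pd k f) (fun m => z (Sum.inl m))
          - pd i (pd k f) (fun m => z (Sum.inl m)) * pd j (pd l f) (fun m => z (Sum.inl m))) ∧
      (∀ a b c d : Fin p ⊕ Fin p, (a.isRight ∨ b.isRight ∨ c.isRight ∨ d.isRight) →
        curv (metric1 p f) a b c d z = 0) := by
  intro z
  constructor
  · intro i j k l
    exact Stmt6Aux.curv_llll hf i j k l z
  · intro a b c d h
    exact Stmt6Aux.curv_zero hf a b c d h z
end

section
/- Let (z_1,...,z_n) be global coordinates on ℝ^n and g a pseudo-Riemannian metric whose Levi-Civita connection satisfies ∇_{∂_a}∂_b = Σ_{c > max(a,b)} Γ_{ab}^c(z_1,...,z_{c-1}) ∂_c, i.e. the Christoffel symbol Γ_{ab}^c vanishes unless c > a and c > b, and depends only on z_1,...,z_{c-1}. Then every geodesic of (ℝ^n,g) extends for all time: the manifold is geodesically complete. -/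
/-- `γ : ℝ → ℝ^n` is a geodesic for the Christoffel symbols `Γ_{ab}^c` if each coordinate is
differentiable and `z̈_c + Σ_{a,b} ż_a ż_b Γ_{ab}^c(γ) = 0`. -/
def IsGeodesic {n : ℕ} (Γ : Fin n → Fin n → Fin n → (Fin n → ℝ) → ℝ)
    (γ : ℝ → Fin n → ℝ) : Prop :=
  (∀ c t, DifferentiableAt ℝ (fun s => γ s c) t) ∧
  (∀ c t, HasDerivAt (deriv fun s => γ s c)
      (-(∑ a, ∑ b, deriv (fun s => γ s a) t * deriv (fun s => γ s b) t * Γ a b c (γ t))) t)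

open intervalIntegral MeasureTheory

noncomputable def geo (n : ℕ) (Γ : Fin n → Fin n → Fin n → (Fin n → ℝ) → ℝ)
    (P V : ℕ → ℝ) : ℕ → ℝ → ℝ
  | k => fun t => P k + V k * t + ∫ s in (0:ℝ)..t, ∫ u in (0:ℝ)..s,
      -(∑ a : Fin n, ∑ b : Fin n,
        (if h : (a:ℕ) < k then deriv (geo n Γ P V a) u else 0) *
        (if h : (b:ℕ) < k then deriv (geo n Γ P V b) u else 0) *
        (if h : k < n then Γ a b ⟨k, h⟩
            (fun d => if h' : (d:ℕ) < k then geo n Γ P V d u else 0) else 0))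
  termination_by k => k

noncomputable def Gfun (n : ℕ) (Γ : Fin n → Fin n → Fin n → (Fin n → ℝ) → ℝ)
    (P V : ℕ → ℝ) (k : ℕ) (u : ℝ) : ℝ :=
  -(∑ a : Fin n, ∑ b : Fin n,
        (if h : (a:ℕ) < k then deriv (geo n Γ P V a) u else 0) *
        (if h : (b:ℕ) < k then deriv (geo n Γ P V b) u else 0) *
        (if h : k < n then Γ a b ⟨k, h⟩
            (fun d => if h' : (d:ℕ) < k then geo n Γ P V d u else 0) else 0))

theorem geo_eq (n : ℕ) (Γ : Fin n → Fin n → Fin n → (Fin n → ℝ) → ℝ)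
    (P V : ℕ → ℝ) (k : ℕ) (t : ℝ) :
    geo n Γ P V k t = P k + V k * t + ∫ s in (0:ℝ)..t, ∫ u in (0:ℝ)..s, Gfun n Γ P V k u := by
  rw [geo]; rfl

lemma prim_hasDerivAt {f : ℝ → ℝ} (hf : Continuous f) (t : ℝ) :
    HasDerivAt (fun x => ∫ u in (0:ℝ)..x, f u) (f t) t :=
  intervalIntegral.integral_hasDerivAt_right (hf.intervalIntegrable _ _)
    hf.aestronglyMeasurable.stronglyMeasurableAtFilter hf.continuousAt

lemma prim_continuous {f : ℝ → ℝ} (hf : Continuous f) :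
    Continuous (fun x => ∫ u in (0:ℝ)..x, f u) :=
  Differentiable.continuous (fun t => (prim_hasDerivAt hf t).differentiableAt)

theorem key (n : ℕ) (Γ : Fin n → Fin n → Fin n → (Fin n → ℝ) → ℝ)
    (P V : ℕ → ℝ) (hcont : ∀ a b c, Continuous (Γ a b c)) (k : ℕ) :
    Continuous (Gfun n Γ P V k) ∧
    (∀ t, HasDerivAt (geo n Γ P V k) (V k + ∫ u in (0:ℝ)..t, Gfun n Γ P V k u) t) ∧
    deriv (geo n Γ P V k) = fun t => V k + ∫ u in (0:ℝ)..t, Gfun n Γ P V k u := by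
  induction k using Nat.strong_induction_on with
  | _ k IH =>
    have hgc : ∀ m, m < k → Continuous (geo n Γ P V m) := fun m hm =>
      Differentiable.continuous (fun t => ((IH m hm).2.1 t).differentiableAt)
    have hdc : ∀ m, m < k → Continuous (deriv (geo n Γ P V m)) := by
      intro m hm
      rw [(IH m hm).2.2]
      exact continuous_const.add (prim_continuous (IH m hm).1)
    have hGcont : Continuous (Gfun n Γ P V k) := by
      unfold Gfun
      refine Continuous.neg (continuous_finset_sum _ fun a _ =>
        continuous_finset_sum _ fun b _ => Continuous.mul (Continuous.mul ?_ ?_) ?_)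
      · by_cases h : (a:ℕ) < k
        · simpa [h] using hdc a h
        · simp [h]; exact continuous_const
      · by_cases h : (b:ℕ) < k
        · simpa [h] using hdc b h
        · simp [h]; exact continuous_const
      · by_cases h : k < n
        · simp only [h, dif_pos]
          exact (hcont a b ⟨k, h⟩).comp (continuous_pi fun d => by
            by_cases h' : (d:ℕ) < k
            · simpa [h'] using hgc d h'
            · simp [h']; exact continuous_const)
        · simp [h]; exact continuous_const
    have hIcont : Continuous (fun s => ∫ u in (0:ℝ)..s, Gfun n Γ P V k u) :=
      prim_continuous hGcont
    have hderiv : ∀ t, HasDerivAt (geo n Γ P V k)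
        (V k + ∫ u in (0:ℝ)..t, Gfun n Γ P V k u) t := by
      intro t
      have h1 : HasDerivAt (fun x => P k + V k * x +
          ∫ s in (0:ℝ)..x, ∫ u in (0:ℝ)..s, Gfun n Γ P V k u)
          (V k + ∫ u in (0:ℝ)..t, Gfun n Γ P V k u) t := by
        have := ((hasDerivAt_const t (P k)).add
          ((hasDerivAt_id t).const_mul (V k))).add (prim_hasDerivAt hIcont t)
        simpa [Pi.add_def] using this
      have : geo n Γ P V k = fun x => P k + V k * x +
          ∫ s in (0:ℝ)..x, ∫ u in (0:ℝ)..s, Gfun n Γ P V k u :=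
        funext fun x => geo_eq n Γ P V k x
      rw [this]; exact h1
    exact ⟨hGcont, hderiv, funext fun t => (hderiv t).deriv⟩

/-- Lemma 2.1 (1): if the Christoffel symbols satisfy the triangular condition
(`Γ_{ab}^c = 0` unless `c > a` and `c > b`, with `Γ_{ab}^c` depending only on `z_1,...,z_{c-1}`),
then the manifold is geodesically complete: for every initial condition there is a geodesic
defined for all time. -/
theorem stmt8 (n : ℕ) (Γ : Fin n → Fin n → Fin n → (Fin n → ℝ) → ℝ)
    (hcont : ∀ a b c, Continuous (Γ a b c))
    (htri : ∀ a b c : Fin n, ¬(a < c ∧ b < c) → ∀ z, Γ a b c z = 0)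
    (hdep : ∀ (a b c : Fin n) (z w : Fin n → ℝ), (∀ d, d < c → z d = w d) → Γ a b c z = Γ a b c w) :
    ∀ P V₀ : Fin n → ℝ, ∃ γ : ℝ → Fin n → ℝ, IsGeodesic Γ γ ∧ γ 0 = P ∧
      (∀ c, deriv (fun s => γ s c) 0 = V₀ c) := by
  intro P V₀
  set P' : ℕ → ℝ := fun k => if h : k < n then P ⟨k, h⟩ else 0 with hP'
  set V' : ℕ → ℝ := fun k => if h : k < n then V₀ ⟨k, h⟩ else 0 with hV'
  refine ⟨fun t c => geo n Γ P' V' c t, ⟨?_, ?_⟩, ?_, ?_⟩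
  · intro c t
    exact ((key n Γ P' V' hcont c).2.1 t).differentiableAt
  · intro c t
    have hd : ∀ a : Fin n, (deriv fun s => geo n Γ P' V' a s) = deriv (geo n Γ P' V' a) :=
      fun a => rfl
    have h1 : HasDerivAt (deriv (geo n Γ P' V' c)) (Gfun n Γ P' V' c t) t := by
      rw [(key n Γ P' V' hcont c).2.2]
      simpa [Pi.add_def] using (hasDerivAt_const t (V' c)).add
        (prim_hasDerivAt (key n Γ P' V' hcont c).1 t)
    have heq : Gfun n Γ P' V' c t =
        -(∑ a : Fin n, ∑ b : Fin n, deriv (fun s => geo n Γ P' V' (↑a) s) t *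
          deriv (fun s => geo n Γ P' V' (↑b) s) t
          * Γ a b c (fun d => geo n Γ P' V' (↑d) t)) := by
      unfold Gfun
      congr 1
      refine Finset.sum_congr rfl fun a _ => Finset.sum_congr rfl fun b _ => ?_
      rw [hd a, hd b]
      by_cases hab : a < c ∧ b < c
      · have ha : (a : ℕ) < (c : ℕ) := hab.1
        have hb : (b : ℕ) < (c : ℕ) := hab.2
        simp only [ha, hb, c.isLt, dif_pos, Fin.eta]
        congr 1
        apply hdep
        intro d hd'
        simp [Fin.lt_iff_val_lt_val.mp hd']
      · rw [htri a b c hab]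
        rcases not_and_or.mp hab with h | h
        · have : ¬ ((a:ℕ) < (c:ℕ)) := fun hh => h hh
          simp [this]
        · have : ¬ ((b:ℕ) < (c:ℕ)) := fun hh => h hh
          simp [this]
    rw [← heq] at *
    exact h1
  · funext c
    simp [geo_eq, hP', c.isLt]
  · intro c
    rw [show (fun s => geo n Γ P' V' c s) = geo n Γ P' V' c from rfl,
      (key n Γ P' V' hcont c).2.2]
    simp [hV', c.isLt]
end

section
/- Under the hypotheses of the triangular Christoffel symbol condition (Γ_{ab}^c = 0 unless c > max(a,b), and Γ_{ab}^c depends only on z_1,...,z_{c-1}), for any two points P, Q ∈ ℝ^n there exists a unique geodesic γ with γ(0) = P and γ(1) = Q; consequently exp_P : T_Pℝ^n → ℝ^n is a bijection for every P. -/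
/-- The forcing term of the geodesic equation. -/
noncomputable def myF {n : ℕ} (Γ : Fin n → Fin n → Fin n → (Fin n → ℝ) → ℝ)
    (γ : ℝ → Fin n → ℝ) (c : Fin n) (t : ℝ) : ℝ :=
  -(∑ a, ∑ b, deriv (fun s => γ s a) t * deriv (fun s => γ s b) t * Γ a b c (γ t))

/-- Under the triangular conditions, the forcing for coordinate `c` depends only on
coordinates below `c`. -/
lemma myF_congr {n : ℕ} {Γ : Fin n → Fin n → Fin n → (Fin n → ℝ) → ℝ}
    (htri : ∀ a b c : Fin n, ¬(a < c ∧ b < c) → ∀ z, Γ a b c z = 0)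
    (hdep : ∀ (a b c : Fin n) (z w : Fin n → ℝ), (∀ d, d < c → z d = w d) → Γ a b c z = Γ a b c w)
    {γ1 γ2 : ℝ → Fin n → ℝ} (c : Fin n)
    (h : ∀ d : Fin n, d < c → (fun s => γ1 s d) = (fun s => γ2 s d)) :
    myF Γ γ1 c = myF Γ γ2 c := by
  funext t
  unfold myF
  congr 1
  refine Finset.sum_congr rfl fun a _ => Finset.sum_congr rfl fun b _ => ?_
  by_cases hab : a < c ∧ b < c
  · rw [h a hab.1, h b hab.2]
    congr 1
    exact hdep a b c _ _ fun d hd => congrFun (h d hd) t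
  · rw [htri a b c hab (γ1 t), htri a b c hab (γ2 t)]
    simp

/-- The forcing term is continuous when all coordinates are `C¹`. -/
lemma myF_cont {n : ℕ} {Γ : Fin n → Fin n → Fin n → (Fin n → ℝ) → ℝ}
    (hcont : ∀ a b c, Continuous (Γ a b c)) {γ : ℝ → Fin n → ℝ}
    (hdiff : ∀ c t, HasDerivAt (fun s => γ s c) (deriv (fun s => γ s c) t) t)
    (hdc : ∀ c, Continuous (deriv fun s => γ s c)) (c : Fin n) :
    Continuous (myF Γ γ c) := by
  have hγc : Continuous (fun t => γ t) := continuous_pi fun d =>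
    continuous_iff_continuousAt.mpr fun t => (hdiff d t).continuousAt
  unfold myF
  apply Continuous.neg
  refine continuous_finset_sum _ fun a _ => continuous_finset_sum _ fun b _ => ?_
  exact ((hdc a).mul (hdc b)).mul ((hcont a b c).comp hγc)

/-- Given continuous `f` and endpoint values, there is `h` with `h'' = f`, `h 0 = A`, `h 1 = B`. -/
lemma my_exists_primitive2 {f : ℝ → ℝ} (hf : Continuous f) (A B : ℝ) :
    ∃ h : ℝ → ℝ, h 0 = A ∧ h 1 = B ∧
      (∀ t, HasDerivAt h (deriv h t) t) ∧ Continuous (deriv h) ∧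
      (∀ t, HasDerivAt (deriv h) (f t) t) := by
  set I : ℝ → ℝ := fun t => ∫ u in (0:ℝ)..t, f u with hI
  have hIderiv : ∀ t, HasDerivAt I (f t) t := fun t =>
    (hf.integral_hasStrictDerivAt 0 t).hasDerivAt
  have hIcont : Continuous I := continuous_iff_continuousAt.mpr fun t =>
    (hIderiv t).continuousAt
  set J : ℝ → ℝ := fun t => ∫ s in (0:ℝ)..t, I s with hJ
  have hJderiv : ∀ t, HasDerivAt J (I t) t := fun t =>
    (hIcont.integral_hasStrictDerivAt 0 t).hasDerivAt
  have hJ0 : J 0 = 0 := intervalIntegral.integral_same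
  set C : ℝ := B - A - J 1 with hC
  have hd : ∀ t, HasDerivAt (fun t => A + C * t + J t) (C + I t) t := by
    intro t
    have h1 : HasDerivAt (fun t : ℝ => A + C * t) C t := by
      exact ((hasDerivAt_const t A).add ((hasDerivAt_id t).const_mul C)).congr_deriv (by ring)
    exact h1.add (hJderiv t)
  have hde : (deriv fun t => A + C * t + J t) = fun t => C + I t := by
    funext t; exact (hd t).deriv
  refine ⟨fun t => A + C * t + J t, ?_, ?_, ?_, ?_, ?_⟩
  · simp [hJ0]
  · simp [hC]; ring
  · intro t; rw [hde]; exact hd t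
  · rw [hde]; exact continuous_const.add hIcont
  · intro t; rw [hde]
    exact ((hasDerivAt_const t C).add (hIderiv t)).congr_deriv (by ring)

/-- Uniqueness: two functions with the same second derivative and same values at `0` and `1`
coincide. -/
lemma my_second_deriv_unique {g1 g2 : ℝ → ℝ}
    (h1d : ∀ t, DifferentiableAt ℝ g1 t) (h2d : ∀ t, DifferentiableAt ℝ g2 t)
    (hdd : ∀ t, ∃ k, HasDerivAt (deriv g1) k t ∧ HasDerivAt (deriv g2) k t)
    (h0 : g1 0 = g2 0) (h1 : g1 1 = g2 1) : g1 = g2 := by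
  set D : ℝ → ℝ := fun t => deriv g1 t - deriv g2 t with hD
  have hDd : ∀ t, HasDerivAt D 0 t := by
    intro t
    obtain ⟨k, hk1, hk2⟩ := hdd t
    exact (hk1.sub hk2).congr_deriv (by ring)
  have hDconst : ∀ t, D t = D 0 :=
    fun t => is_const_of_deriv_eq_zero (fun x => (hDd x).differentiableAt)
      (fun x => (hDd x).deriv) t 0
  set G : ℝ → ℝ := fun t => g1 t - g2 t - D 0 * t with hG
  have hGd : ∀ t, HasDerivAt G 0 t := by
    intro t
    have := (((h1d t).hasDerivAt).sub ((h2d t).hasDerivAt)).sub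
      ((hasDerivAt_id t).const_mul (D 0))
    have e : deriv g1 t - deriv g2 t - D 0 * 1 = 0 := by
      have h := hDconst t
      simp only [hD] at h
      show deriv g1 t - deriv g2 t - (deriv g1 0 - deriv g2 0) * 1 = 0
      rw [mul_one]; linarith
    exact e ▸ this
  have hGconst : ∀ t, G t = G 0 :=
    fun t => is_const_of_deriv_eq_zero (fun x => (hGd x).differentiableAt)
      (fun x => (hGd x).deriv) t 0
  have hG0 : G 0 = 0 := by simp [hG, h0]
  have hD0 : D 0 = 0 := by
    have := hGconst 1
    rw [hG0] at this
    simp only [hG, h1, mul_one] at this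
    linarith
  funext t
  have := hGconst t
  rw [hG0] at this
  simp only [hG, hD0, zero_mul, sub_zero] at this
  linarith

/-- Lemma 2.1 (2): under the triangular Christoffel condition, any two points `P, Q` are joined
by a unique geodesic `γ` with `γ(0) = P`, `γ(1) = Q`; consequently, for each `P` and each `Q`
there is a unique initial velocity whose geodesic reaches `Q` at time `1`, i.e. `exp_P` is a
bijection. -/
theorem stmt9 (n : ℕ) (Γ : Fin n → Fin n → Fin n → (Fin n → ℝ) → ℝ)
    (hcont : ∀ a b c, Continuous (Γ a b c))
    (htri : ∀ a b c : Fin n, ¬(a < c ∧ b < c) → ∀ z, Γ a b c z = 0)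
    (hdep : ∀ (a b c : Fin n) (z w : Fin n → ℝ), (∀ d, d < c → z d = w d) → Γ a b c z = Γ a b c w) :
    (∀ P Q : Fin n → ℝ, ∃! γ : ℝ → Fin n → ℝ, IsGeodesic Γ γ ∧ γ 0 = P ∧ γ 1 = Q) ∧
    (∀ P Q : Fin n → ℝ, ∃! v : Fin n → ℝ, ∃ γ : ℝ → Fin n → ℝ,
      IsGeodesic Γ γ ∧ γ 0 = P ∧ (∀ c, deriv (fun s => γ s c) 0 = v c) ∧ γ 1 = Q) := by
  have main : ∀ P Q : Fin n → ℝ, ∃! γ : ℝ → Fin n → ℝ,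
      IsGeodesic Γ γ ∧ γ 0 = P ∧ γ 1 = Q := by
    intro P Q
    -- Existence: build the geodesic coordinate by coordinate.
    have ex : ∀ m : ℕ, ∃ γ : ℝ → Fin n → ℝ,
        (∀ c t, HasDerivAt (fun s => γ s c) (deriv (fun s => γ s c) t) t) ∧
        (∀ c, Continuous (deriv fun s => γ s c)) ∧
        γ 0 = P ∧ γ 1 = Q ∧
        (∀ c : Fin n, c.val < m → ∀ t,
          HasDerivAt (deriv fun s => γ s c) (myF Γ γ c t) t) := by
      intro m
      induction m with
      | zero =>
        refine ⟨fun t c => P c + (Q c - P c) * t, ?_, ?_, ?_, ?_, ?_⟩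
        · intro c t
          have hD : HasDerivAt (fun s => P c + (Q c - P c) * s) (Q c - P c) t := by
            exact ((hasDerivAt_const t (P c)).add
              ((hasDerivAt_id t).const_mul (Q c - P c))).congr_deriv (by ring)
          rw [hD.deriv]; exact hD
        · intro c
          have hde : (deriv fun s => P c + (Q c - P c) * s) = fun _ => Q c - P c := by
            funext t
            have hD : HasDerivAt (fun s => P c + (Q c - P c) * s) (Q c - P c) t := by
              exact ((hasDerivAt_const t (P c)).add
                ((hasDerivAt_id t).const_mul (Q c - P c))).congr_deriv (by ring)
            exact hD.deriv
          rw [hde]; exact continuous_const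
        · funext c; simp
        · funext c; simp
        · intro c hc; exact absurd hc (Nat.not_lt_zero _)
      | succ m ih =>
        obtain ⟨γ, hdiff, hdc, h0, h1, heq⟩ := ih
        by_cases hm : m < n
        · set c0 : Fin n := ⟨m, hm⟩ with hc0
          have hFcont : Continuous (myF Γ γ c0) := myF_cont hcont hdiff hdc c0
          obtain ⟨h, hA, hB, hhd, hhdc, hhdd⟩ := my_exists_primitive2 hFcont (P c0) (Q c0)
          set γ' : ℝ → Fin n → ℝ := fun t c => if c = c0 then h t else γ t c with hγ'
          have e1 : ∀ c : Fin n, c ≠ c0 → (fun s => γ' s c) = fun s => γ s c := by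
            intro c hcne; funext s; simp [hγ', hcne]
          have e2 : (fun s => γ' s c0) = h := by funext s; simp [hγ']
          refine ⟨γ', ?_, ?_, ?_, ?_, ?_⟩
          · intro c t
            rcases eq_or_ne c c0 with rfl | hcne
            · rw [e2]; exact hhd t
            · rw [e1 c hcne]; exact hdiff c t
          · intro c
            rcases eq_or_ne c c0 with rfl | hcne
            · rw [e2]; exact hhdc
            · rw [e1 c hcne]; exact hdc c
          · funext c
            show (if c = c0 then h 0 else γ 0 c) = P c
            split_ifs with hcc
            · subst hcc; exact hA
            · exact congrFun h0 c
          · funext c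
            show (if c = c0 then h 1 else γ 1 c) = Q c
            split_ifs with hcc
            · subst hcc; exact hB
            · exact congrFun h1 c
          · intro c hc t
            rcases eq_or_ne c c0 with rfl | hcne
            · have hFeq : myF Γ γ' c0 = myF Γ γ c0 := by
                refine myF_congr htri hdep c0 fun d hd => e1 d ?_
                exact ne_of_lt hd
              rw [e2, hFeq]
              exact hhdd t
            · have hcm : c.val < m := by
                have hv : c.val ≠ m := by
                  intro hvm
                  exact hcne (Fin.ext (by simp [hc0, hvm]))
                omega
              have hFeq : myF Γ γ' c = myF Γ γ c := by
                refine myF_congr htri hdep c fun d hd => e1 d ?_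
                intro hdc0
                have hdv : d.val < c.val := hd
                have : d.val = m := by rw [hdc0]
                omega
              rw [e1 c hcne, hFeq]
              exact heq c hcm t
        · refine ⟨γ, hdiff, hdc, h0, h1, fun c hc t => heq c ?_ t⟩
          have := c.isLt
          omega
    obtain ⟨γ, hdiff, hdc, h0, h1, heq⟩ := ex n
    refine ⟨γ, ⟨⟨fun c t => (hdiff c t).differentiableAt, fun c t => heq c c.isLt t⟩, h0, h1⟩, ?_⟩
    -- Uniqueness
    rintro γ' ⟨⟨hd', he'⟩, h0', h1'⟩
    have key : ∀ m : ℕ, ∀ c : Fin n, c.val < m →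
        (fun s => γ' s c) = (fun s => γ s c) := by
      intro m
      induction m with
      | zero => intro c hc; exact absurd hc (Nat.not_lt_zero _)
      | succ m ih =>
        intro c hc
        rcases Nat.lt_succ_iff_lt_or_eq.mp hc with hlt | hE
        · exact ih c hlt
        · have hFeq : myF Γ γ' c = myF Γ γ c := by
            refine myF_congr htri hdep c fun d hd => ih d ?_
            have hdv : d.val < c.val := hd
            omega
          have h2 : ∀ t, HasDerivAt (deriv fun s => γ' s c) (myF Γ γ c t) t := by
            intro t
            have h3 : HasDerivAt (deriv fun s => γ' s c) (myF Γ γ' c t) t := he' c t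
            rwa [congrFun hFeq t] at h3
          refine my_second_deriv_unique (fun t => hd' c t)
            (fun t => (hdiff c t).differentiableAt)
            (fun t => ⟨myF Γ γ c t, h2 t, heq c c.isLt t⟩) ?_ ?_
          · show γ' 0 c = γ 0 c; rw [h0', h0]
          · show γ' 1 c = γ 1 c; rw [h1', h1]
    funext t c
    exact congrFun (key n c c.isLt) t
  refine ⟨main, ?_⟩
  intro P Q
  obtain ⟨γ, hγ, huniq⟩ := main P Q
  refine ⟨fun c => deriv (fun s => γ s c) 0,
    ⟨γ, hγ.1, hγ.2.1, fun c => rfl, hγ.2.2⟩, ?_⟩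
  rintro v ⟨γ', hg', h0', hv', h1'⟩
  have hγeq : γ' = γ := huniq γ' ⟨hg', h0', h1'⟩
  funext c
  rw [← hv' c, hγeq]
end

section
/- Let V = ℝ^{2r+2} with basis {X, Y, U_1,...,U_r, V_1,...,V_r}, inner product g(X,Y) = 1, g(U_i,V_i) = 1 (others zero), and algebraic curvature tensor A with nonzero components A(X,U_r,U_r,X) = 1 and A(X,U_i,V_{i+1},X) = 1 for 1 ≤ i ≤ r-1. Then for every ξ ∈ V the Jacobi operator J(ξ), defined by g(J(ξ)y,z) = A(y,ξ,ξ,z), satisfies J(ξ)^{2r} = 0. -/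
/-- `ℝ^{2r+2}` with coordinates `(u, v, x, y)`: for `a : V3 r`, `a.1` are the `U`-coordinates,
`a.2.1` the `V`-coordinates, `a.2.2.1` the `X`-coordinate and `a.2.2.2` the `Y`-coordinate. -/
abbrev V3 (r : ℕ) := (Fin r → ℝ) × (Fin r → ℝ) × ℝ × ℝ

/-- The symmetric bilinear form with `S(U_r,U_r) = 1` and `S(U_i,V_{i+1}) = S(V_{i+1},U_i) = 1`
for `1 ≤ i ≤ r-1` (all other components zero). -/
def S3 (r : ℕ) (b c : V3 r) : ℝ :=
  (if h : 0 < r then b.1 ⟨r - 1, Nat.sub_lt h Nat.one_pos⟩ * c.1 ⟨r - 1, Nat.sub_lt h Nat.one_pos⟩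
   else 0)
  + ∑ i : Fin r, (if h : i.1 + 1 < r
      then b.1 i * c.2.1 ⟨i.1 + 1, h⟩ + b.2.1 ⟨i.1 + 1, h⟩ * c.1 i else 0)

/-- The neutral signature inner product: `g(X,Y) = 1`, `g(U_i,V_i) = 1`. -/
def g3v (r : ℕ) (a b : V3 r) : ℝ :=
  a.2.2.1 * b.2.2.2 + a.2.2.2 * b.2.2.1 + ∑ i, (a.1 i * b.2.1 i + a.2.1 i * b.1 i)

/-- The algebraic curvature tensor `A_{3,r}`, whose only nonzero components up to the
curvature symmetries are `A(X,U_r,U_r,X) = 1` and `A(X,U_i,V_{i+1},X) = 1` for `1 ≤ i ≤ r-1`. -/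
def A3 (r : ℕ) (a b c d : V3 r) : ℝ :=
  S3 r b c * a.2.2.1 * d.2.2.1 - S3 r b d * a.2.2.1 * c.2.2.1
  - S3 r a c * b.2.2.1 * d.2.2.1 + S3 r a d * b.2.2.1 * c.2.2.1

namespace S10

variable {r : ℕ}

/-- the nilpotent shift `N` with `g(Nw, z) = S(w,z)`. -/
def Nf (r : ℕ) (w : V3 r) : V3 r :=
  (fun j => if h : 1 ≤ j.1 then w.1 ⟨j.1 - 1, lt_of_le_of_lt (Nat.sub_le _ _) j.2⟩ else 0,
   fun j => (if h : j.1 + 1 < r then w.2.1 ⟨j.1 + 1, h⟩ else 0)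
          + (if h : j.1 = r - 1 then w.1 ⟨r - 1, h ▸ j.2⟩ else 0),
   0, 0)

def Y0 (r : ℕ) : V3 r := (0, 0, 0, 1)

/-- extended `u`-coordinates -/
def ue (w : V3 r) (n : ℕ) : ℝ := if h : n < r then w.1 ⟨n, h⟩ else 0
/-- extended `v`-coordinates -/
def ve (w : V3 r) (n : ℕ) : ℝ := if h : n < r then w.2.1 ⟨n, h⟩ else 0

lemma ue_ge (w : V3 r) {n : ℕ} (h : r ≤ n) : ue w n = 0 := by
  simp [ue, Nat.not_lt.2 h]

lemma ve_ge (w : V3 r) {n : ℕ} (h : r ≤ n) : ve w n = 0 := by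
  simp [ve, Nat.not_lt.2 h]

lemma S3eq (w z : V3 r) :
    S3 r w z = ue w (r-1) * ue z (r-1)
      + ∑ i ∈ Finset.range r, (ue w i * ve z (i+1) + ve w (i+1) * ue z i) := by
  rw [S3]
  congr 1
  · rcases Nat.eq_zero_or_pos r with h | h
    · subst h; simp [ue]
    · have h1 : r - 1 < r := Nat.sub_lt h Nat.one_pos
      simp [ue, h, h1]
  · rw [← Fin.sum_univ_eq_sum_range (fun i => ue w i * ve z (i+1) + ve w (i+1) * ue z i) r]
    apply Finset.sum_congr rfl
    intro i _
    by_cases h : i.1 + 1 < r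
    · rw [dif_pos h]
      simp [ue, ve, dif_pos i.2, dif_pos h]
    · rw [dif_neg h]
      rw [ve_ge z (Nat.not_lt.1 h), ve_ge w (Nat.not_lt.1 h)]
      ring

lemma g3veq (a b : V3 r) :
    g3v r a b = a.2.2.1 * b.2.2.2 + a.2.2.2 * b.2.2.1
      + ∑ i ∈ Finset.range r, (ue a i * ve b i + ve a i * ue b i) := by
  rw [g3v]
  congr 1
  rw [← Fin.sum_univ_eq_sum_range (fun i => ue a i * ve b i + ve a i * ue b i) r]
  apply Finset.sum_congr rfl
  intro i _
  simp [ue, ve, dif_pos i.2]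


lemma ue_Nf (w : V3 r) (n : ℕ) :
    ue (Nf r w) n = if 1 ≤ n ∧ n < r then ue w (n-1) else 0 := by
  unfold ue Nf
  by_cases h : n < r
  · rw [dif_pos h]
    by_cases h1 : 1 ≤ n
    · have : n - 1 < r := lt_of_le_of_lt (Nat.sub_le _ _) h
      simp [h1, h, this]
    · simp [h1]
  · simp [h]

lemma ve_Nf (w : V3 r) (n : ℕ) :
    ve (Nf r w) n = ve w (n+1) + (if n = r - 1 then ue w (r-1) else 0) := by
  unfold ve Nf
  by_cases h : n < r
  · rw [dif_pos h]
    dsimp only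
    split_ifs with h1 h2 h2
    · simp [ve, ue, h1, show r - 1 < r by omega]
    · simp [ve, h1]
    · simp [ve, ue, h1, show r - 1 < r by omega]
    · simp [ve, h1]
  · have h3 : ¬ n + 1 < r := by omega
    by_cases h2 : n = r - 1
    · have hr0 : r = 0 := by omega
      subst hr0
      simp [ve, ue, h, h2]
    · simp [ve, h, h2, h3]

lemma gN (w z : V3 r) : g3v r (Nf r w) z = S3 r w z := by
  rcases Nat.eq_zero_or_pos r with h0 | h0
  · subst h0; simp [g3v, S3, Nf]
  obtain ⟨s, hs⟩ : ∃ s, r = s + 1 := ⟨r - 1, by omega⟩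
  rw [g3veq, S3eq]
  have hx : (Nf r w).2.2.1 = 0 := rfl
  have hy : (Nf r w).2.2.2 = 0 := rfl
  rw [hx, hy]
  simp only [zero_mul, mul_zero, zero_add, add_zero]
  have key : ∀ i ∈ Finset.range r,
      ue (Nf r w) i * ve z i + ve (Nf r w) i * ue z i
      = ((if 1 ≤ i ∧ i < r then ue w (i-1) else 0) * ve z i
         + ve w (i+1) * ue z i) + (if i = r - 1 then ue w (r-1) else 0) * ue z i := by
    intro i _
    rw [ue_Nf, ve_Nf]; ring
  rw [Finset.sum_congr rfl key, Finset.sum_add_distrib]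
  have h1 : ∑ i ∈ Finset.range r, (if i = r - 1 then ue w (r-1) else 0) * ue z i
      = ue w (r-1) * ue z (r-1) := by
    rw [Finset.sum_eq_single (r-1)]
    · simp
    · intro b _ hb; simp [hb]
    · intro hb; exact absurd (Finset.mem_range.2 (Nat.sub_lt h0 Nat.one_pos)) hb
  rw [h1, Finset.sum_add_distrib]
  have h2 : ∑ i ∈ Finset.range r, (if 1 ≤ i ∧ i < r then ue w (i-1) else 0) * ve z i
      = ∑ i ∈ Finset.range r, ue w i * ve z (i+1) := by
    subst hs
    rw [Finset.sum_range_succ' (fun i => (if 1 ≤ i ∧ i < s + 1 then ue w (i-1) else 0) * ve z i) s]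
    rw [Finset.sum_range_succ (fun i => ue w i * ve z (i+1)) s]
    rw [ve_ge z (le_refl (s+1))]
    have hz : (if 1 ≤ 0 ∧ 0 < s + 1 then ue w (0-1) else 0) * ve z 0 = 0 := by norm_num
    rw [hz, add_zero, mul_zero, add_zero]
    apply Finset.sum_congr rfl
    intro i hi
    have : 1 ≤ i + 1 ∧ i + 1 < s + 1 := ⟨Nat.le_add_left _ _, by simpa using Finset.mem_range.1 hi⟩
    simp [this]
  rw [h2, Finset.sum_add_distrib]
  ring

lemma Ssym (b c : V3 r) : S3 r b c = S3 r c b := by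
  unfold S3
  congr 1
  · split_ifs <;> ring
  · apply Finset.sum_congr rfl
    intro i _
    split_ifs <;> ring

lemma gsym (a b : V3 r) : g3v r a b = g3v r b a := by
  unfold g3v
  have : ∑ i, (a.1 i * b.2.1 i + a.2.1 i * b.1 i) = ∑ i, (b.1 i * a.2.1 i + b.2.1 i * a.1 i) := by
    apply Finset.sum_congr rfl; intro i _; ring
  rw [this]; ring

lemma gN' (w z : V3 r) : g3v r w (Nf r z) = S3 r w z := by
  rw [gsym, gN, Ssym]

lemma g_add_left (a b z : V3 r) : g3v r (a + b) z = g3v r a z + g3v r b z := by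
  simp only [g3v, Prod.fst_add, Prod.snd_add, Pi.add_apply, add_mul, Finset.sum_add_distrib]
  ring

lemma g_smul_left (t : ℝ) (a z : V3 r) : g3v r (t • a) z = t * g3v r a z := by
  simp only [g3v, Prod.smul_fst, Prod.smul_snd, Pi.smul_apply, smul_eq_mul,
    mul_assoc, ← Finset.mul_sum, mul_add]
  rw [Finset.mul_sum]
  congr 1
  apply Finset.sum_congr rfl
  intro i _
  ring

lemma g_sub_left (a b z : V3 r) : g3v r (a - b) z = g3v r a z - g3v r b z := by
  have : a - b = a + (-1 : ℝ) • b := by module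
  rw [this, g_add_left, g_smul_left]; ring

lemma g_Y0 (z : V3 r) : g3v r (Y0 r) z = z.2.2.1 := by
  simp [g3v, Y0]

lemma g_zero (z : V3 r) : g3v r 0 z = 0 := by
  simp [g3v]

lemma g_nondeg (w : V3 r) (h : ∀ z, g3v r w z = 0) : w = 0 := by
  have hx : w.2.2.1 = 0 := by
    have := h (0, 0, 0, 1); simpa [g3v] using this
  have hy : w.2.2.2 = 0 := by
    have := h (0, 0, 1, 0); simpa [g3v] using this
  have hu : w.1 = 0 := by
    funext j
    have := h (0, Pi.single j 1, 0, 0)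
    simpa [g3v, Pi.single_apply, mul_ite, Finset.sum_ite_eq'] using this
  have hv : w.2.1 = 0 := by
    funext j
    have := h (Pi.single j 1, 0, 0, 0)
    simpa [g3v, Pi.single_apply, mul_ite, Finset.sum_ite_eq'] using this
  exact Prod.ext hu (Prod.ext hv (Prod.ext hx hy))


lemma Nf_add (a b : V3 r) : Nf r (a + b) = Nf r a + Nf r b := by
  unfold Nf
  refine Prod.ext ?_ (Prod.ext ?_ (by simp))
  · funext j
    simp only [Prod.fst_add, Pi.add_apply]
    split_ifs <;> first | rfl | simp
  · funext j
    simp only [Prod.fst_add, Prod.snd_add, Pi.add_apply]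
    split_ifs <;> ring

lemma Nf_smul (t : ℝ) (a : V3 r) : Nf r (t • a) = t • Nf r a := by
  unfold Nf
  refine Prod.ext ?_ (Prod.ext ?_ ?_)
  · funext j
    simp only [Prod.smul_fst, Pi.smul_apply, smul_eq_mul]
    split_ifs <;> first | rfl | simp
  · funext j
    simp only [Prod.smul_fst, Prod.smul_snd, Pi.smul_apply, smul_eq_mul]
    split_ifs <;> ring
  · simp

lemma Nf_zero : Nf r 0 = 0 := by
  have := Nf_smul (r := r) 0 0
  simpa using this

lemma Nf_Y0 : Nf r (Y0 r) = 0 := by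
  unfold Nf Y0
  refine Prod.ext ?_ (Prod.ext ?_ rfl)
  · funext j
    dsimp only
    split_ifs <;> rfl
  · funext j
    dsimp only
    split_ifs <;> first | rfl | simp

lemma Niter_add (k : ℕ) (a b : V3 r) :
    (Nf r)^[k] (a + b) = (Nf r)^[k] a + (Nf r)^[k] b := by
  induction k generalizing a b with
  | zero => rfl
  | succ k ih =>
    rw [Function.iterate_succ_apply, Function.iterate_succ_apply,
      Function.iterate_succ_apply, Nf_add, ih]

lemma Niter_smul (k : ℕ) (t : ℝ) (a : V3 r) :
    (Nf r)^[k] (t • a) = t • (Nf r)^[k] a := by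
  induction k generalizing a with
  | zero => rfl
  | succ k ih =>
    rw [Function.iterate_succ_apply, Function.iterate_succ_apply, Nf_smul, ih]

lemma Niter_zero (k : ℕ) : (Nf r)^[k] (0 : V3 r) = 0 := by
  have := Niter_smul (r := r) k 0 0
  simpa using this

lemma g_selfadj (a b : V3 r) : g3v r (Nf r a) b = g3v r a (Nf r b) := by
  rw [gN, gN', Ssym]

lemma g_selfadj_iter (k : ℕ) (a b : V3 r) :
    g3v r ((Nf r)^[k] a) b = g3v r a ((Nf r)^[k] b) := by
  induction k generalizing a b with
  | zero => rfl
  | succ k ih =>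
    rw [Function.iterate_succ_apply, Function.iterate_succ_apply', ih, g_selfadj]

lemma Nf_x (w : V3 r) : (Nf r w).2.2.1 = 0 := rfl
lemma Nf_y (w : V3 r) : (Nf r w).2.2.2 = 0 := rfl

/-- the chain coordinates: `c_m = u_m` for `m < r`, `c_m = v_{2r-1-m}` for `r ≤ m < 2r`. -/
def ch (w : V3 r) (m : ℕ) : ℝ :=
  if h : m < r then w.1 ⟨m, h⟩
  else if h2 : m < 2*r then w.2.1 ⟨2*r - 1 - m, by omega⟩ else 0

lemma ch_Nf_zero (w : V3 r) (hr : 0 < r) : ch (Nf r w) 0 = 0 := by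
  unfold ch Nf
  rw [dif_pos hr]
  simp

lemma ch_Nf (w : V3 r) (m : ℕ) (hm : m + 1 < 2*r) :
    ch (Nf r w) (m + 1) = ch w m := by
  unfold ch
  by_cases h1 : m + 1 < r
  · rw [dif_pos h1, dif_pos (show m < r by omega)]
    show (if h : 1 ≤ m + 1 then w.1 ⟨m + 1 - 1, _⟩ else 0) = _
    rw [dif_pos (Nat.le_add_left 1 m)]
    exact congrArg w.1 (Fin.ext (show m + 1 - 1 = m by omega))
  · rw [dif_neg h1, dif_pos hm]
    by_cases h2 : m < r
    · -- m + 1 = r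
      have hmr : m = r - 1 := by omega
      rw [dif_pos h2]
      show (if h : 2*r - 1 - (m+1) + 1 < r then w.2.1 ⟨2*r - 1 - (m+1) + 1, h⟩ else 0)
        + (if h : 2*r - 1 - (m+1) = r - 1 then w.1 ⟨r - 1, _⟩ else 0) = w.1 ⟨m, h2⟩
      rw [dif_neg (by omega), dif_pos (by omega)]
      simp only [zero_add]
      exact congrArg w.1 (Fin.ext (show r - 1 = m by omega))
    · -- r < m + 1 < 2r
      rw [dif_neg h2, dif_pos (show m < 2*r by omega)]
      show (if h : 2*r - 1 - (m+1) + 1 < r then w.2.1 ⟨2*r - 1 - (m+1) + 1, h⟩ else 0)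
        + (if h : 2*r - 1 - (m+1) = r - 1 then w.1 ⟨r - 1, _⟩ else 0) = _
      rw [dif_pos (by omega), dif_neg (by omega)]
      simp only [add_zero]
      exact congrArg w.2.1 (Fin.ext (show 2*r - 1 - (m+1) + 1 = 2*r - 1 - m by omega))

lemma ch_iter (w : V3 r) (hr : 0 < r) (k : ℕ) :
    ∀ m, m < 2*r → ch ((Nf r)^[k] w) m = if k ≤ m then ch w (m - k) else 0 := by
  induction k generalizing w with
  | zero => intro m hm; simp
  | succ k ih =>
    intro m hm
    rw [Function.iterate_succ_apply', ]
    match m with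
    | 0 =>
      rw [ch_Nf_zero _ hr, if_neg (by omega)]
    | m + 1 =>
      rw [ch_Nf _ m hm, ih w m (by omega)]
      by_cases h : k ≤ m
      · rw [if_pos h, if_pos (by omega)]
        congr 1
        omega
      · rw [if_neg h, if_neg (by omega)]

lemma Niter_nilpotent (w : V3 r) (hr : 0 < r) : (Nf r)^[2*r] w = 0 := by
  have hx : ∀ m, m < 2*r → ch ((Nf r)^[2*r] w) m = 0 := by
    intro m hm
    rw [ch_iter w hr (2*r) m hm, if_neg (by omega)]
  obtain ⟨s, hs⟩ : ∃ s, 2*r = s + 1 := ⟨2*r - 1, by omega⟩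
  refine Prod.ext ?_ (Prod.ext ?_ ?_)
  · funext j
    have := hx j.1 (by omega)
    rw [ch, dif_pos j.2] at this
    simpa using this
  · funext j
    have hj : 2*r - 1 - j.1 < 2*r := by omega
    have := hx (2*r - 1 - j.1) hj
    rw [ch, dif_neg (by omega), dif_pos hj] at this
    have he : 2*r - 1 - (2*r - 1 - j.1) = j.1 := by omega
    simp only [he] at this
    simpa using this
  · rw [hs, Function.iterate_succ_apply']
    exact Prod.ext (Nf_x _) (Nf_y _)


lemma Niter_x (k : ℕ) (w : V3 r) : ((Nf r)^[k+1] w).2.2.1 = 0 := by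
  rw [Function.iterate_succ_apply']
  exact Nf_x _

lemma Niter_Y0 (k : ℕ) : (Nf r)^[k+1] (Y0 r) = 0 := by
  rw [Function.iterate_succ_apply, Nf_Y0, Niter_zero]

lemma x_add (a b : V3 r) : (a + b).2.2.1 = a.2.2.1 + b.2.2.1 := rfl
lemma x_smul (t : ℝ) (a : V3 r) : (t • a).2.2.1 = t * a.2.2.1 := rfl
lemma x_Y0 : (Y0 r).2.2.1 = 0 := rfl

/-- the reduced Jacobi operator on the subspace `x = 0`. -/
def Mf (r : ℕ) (ξ z : V3 r) : V3 r :=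
  (-(ξ.2.2.1 * g3v r (Nf r ξ) z)) • Y0 r + (ξ.2.2.1^2) • Nf r z

lemma Mf_x (ξ z : V3 r) : (Mf r ξ z).2.2.1 = 0 := by
  rw [Mf, x_add, x_smul, x_smul, x_Y0, Nf_x]
  ring

lemma Mpow (ξ : V3 r) (m : ℕ) (z : V3 r) :
    (Mf r ξ)^[m+1] z
      = (-(ξ.2.2.1^(2*m+1) * g3v r ((Nf r)^[m+1] ξ) z)) • Y0 r
        + (ξ.2.2.1^(2*m+2)) • (Nf r)^[m+1] z := by
  induction m generalizing z with
  | zero =>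
    norm_num [Function.iterate_one, Mf]
  | succ m ih =>
    rw [Function.iterate_succ_apply, ih (Mf r ξ z)]
    have e1 : g3v r ((Nf r)^[m+1] ξ) (Mf r ξ z)
        = ξ.2.2.1^2 * g3v r ((Nf r)^[m+1+1] ξ) z := by
      rw [gsym ((Nf r)^[m+1] ξ), Mf, g_add_left, g_smul_left, g_smul_left, g_Y0,
        Niter_x m ξ, gsym (Nf r z), ← g_selfadj, ← Function.iterate_succ_apply' (Nf r) (m+1) ξ]
      ring
    have e2 : (Nf r)^[m+1] (Mf r ξ z)
        = ξ.2.2.1^2 • (Nf r)^[m+1+1] z := by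
      rw [Mf, Niter_add, Niter_smul, Niter_smul, Niter_Y0 m,
        ← Function.iterate_succ_apply (Nf r) (m+1) z]
      simp
    rw [e1, e2]
    match_scalars <;> ring

end S10

open S10

/-- Theorem 1.6 (3), algebraic part: for every `ξ` the Jacobi operator `J(ξ)`, characterized by
`g(J(ξ)y, z) = A(y,ξ,ξ,z)`, satisfies `J(ξ)^{2r} = 0`. -/
theorem stmt10 (r : ℕ) (hr : 2 ≤ r) (ξ : V3 r) (J : Module.End ℝ (V3 r))
    (hJ : ∀ y z : V3 r, g3v r (J y) z = A3 r y ξ ξ z) :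
    J ^ (2 * r) = 0 := by
  have hrpos : 0 < r := by omega
  -- explicit formula for J
  have hJf : ∀ y, J y = (S3 r ξ ξ * y.2.2.1 - S3 r y ξ * ξ.2.2.1) • Y0 r
      + (-(ξ.2.2.1 * y.2.2.1)) • Nf r ξ + (ξ.2.2.1^2) • Nf r y := by
    intro y
    set R := (S3 r ξ ξ * y.2.2.1 - S3 r y ξ * ξ.2.2.1) • Y0 r
      + (-(ξ.2.2.1 * y.2.2.1)) • Nf r ξ + (ξ.2.2.1^2) • Nf r y with hR
    have h0 : ∀ z, g3v r (J y - R) z = 0 := by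
      intro z
      rw [g_sub_left, hJ, hR, g_add_left, g_add_left, g_smul_left, g_smul_left,
        g_smul_left, g_Y0, gN, gN, A3]
      ring
    exact sub_eq_zero.1 (g_nondeg _ h0)
  have hJx : ∀ y, (J y).2.2.1 = 0 := by
    intro y
    rw [hJf, x_add, x_add, x_smul, x_smul, x_smul, x_Y0, Nf_x, Nf_x]
    ring
  have hJM : ∀ z, z.2.2.1 = 0 → J z = Mf r ξ z := by
    intro z hz
    rw [hJf, Mf, hz]
    have hSz : S3 r z ξ = g3v r (Nf r ξ) z := by rw [gN, Ssym]
    rw [hSz]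
    match_scalars <;> ring
  have hiter : ∀ k y, (⇑J)^[k+1] y = (Mf r ξ)^[k] (J y) := by
    intro k
    induction k with
    | zero => intro y; rfl
    | succ k ih =>
      intro y
      have hx0 : ((Mf r ξ)^[k] (J y)).2.2.1 = 0 := by
        cases k with
        | zero => exact hJx y
        | succ k =>
          rw [Function.iterate_succ_apply']
          exact Mf_x _ _
      rw [Function.iterate_succ_apply', ih y, hJM _ hx0, ← Function.iterate_succ_apply' (Mf r ξ) k (J y)]
  apply LinearMap.ext
  intro y
  rw [Module.End.pow_apply, LinearMap.zero_apply]
  obtain ⟨s, hs⟩ : ∃ s, 2*r = s + 2 := ⟨2*r - 2, by omega⟩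
  have hNil : ∀ w : V3 r, (Nf r)^[s+2] w = 0 := by
    intro w
    rw [← hs]
    exact Niter_nilpotent w hrpos
  rw [hs, hiter (s+1) y, Mpow ξ s (J y)]
  have hNJ : (Nf r)^[s+1] (J y) = 0 := by
    rw [hJf y, Niter_add, Niter_add, Niter_smul, Niter_smul, Niter_smul, Niter_Y0 s,
      ← Function.iterate_succ_apply (Nf r) (s+1) ξ,
      ← Function.iterate_succ_apply (Nf r) (s+1) y, hNil, hNil]
    simp
  have hgJ : g3v r ((Nf r)^[s+1] ξ) (J y) = 0 := by
    rw [gsym, hJ, A3]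
    have h1 : ((Nf r)^[s+1] ξ).2.2.1 = 0 := Niter_x s ξ
    have h2 : S3 r ξ ((Nf r)^[s+1] ξ) = 0 := by
      rw [← gN, ← g_selfadj_iter (s+1),
        ← Function.iterate_succ_apply (Nf r) (s+1) ξ, hNil, g_zero]
    have h3 : S3 r y ((Nf r)^[s+1] ξ) = 0 := by
      rw [← gN, ← g_selfadj_iter (s+1),
        ← Function.iterate_succ_apply (Nf r) (s+1) y, hNil, g_zero]
    rw [h1, h2, h3]
    ring
  rw [hNJ, hgJ]
  simp
end

section
/- With V = ℝ^{2r+2} and A as in the model 𝒰_{3,r} (nonzero components A(X,U_r,U_r,X) = 1, A(X,U_i,V_{i+1},X) = 1 for 1 ≤ i ≤ r-1), the Jacobi operator of the vector X satisfies J(X)^{2r-1}U_1 = ±V_1 ≠ 0; hence J(X) is nilpotent of order exactly 2r. -/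
/-- the explicit Jacobi operator of `X` -/
def Jf (r : ℕ) (y : V3 r) : V3 r :=
  (fun j => if h : 1 ≤ j.1 then y.1 ⟨j.1 - 1, by omega⟩ else 0,
   fun j => if h : j.1 + 1 < r then y.2.1 ⟨j.1 + 1, h⟩ else y.1 j,
   0, 0)

lemma g3v_probe_v (r : ℕ) (a : V3 r) (j : Fin r) :
    g3v r a (0, Pi.single j 1, 0, 0) = a.1 j := by
  simp [g3v, Pi.single_apply, mul_ite, Finset.sum_ite_eq']

lemma g3v_probe_u (r : ℕ) (a : V3 r) (j : Fin r) :
    g3v r a (Pi.single j 1, 0, 0, 0) = a.2.1 j := by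
  simp [g3v, Pi.single_apply, mul_ite, Finset.sum_ite_eq']

lemma g3v_probe_X (r : ℕ) (a : V3 r) : g3v r a (0, 0, 1, 0) = a.2.2.2 := by
  simp [g3v]

lemma g3v_probe_Y (r : ℕ) (a : V3 r) : g3v r a (0, 0, 0, 1) = a.2.2.1 := by
  simp [g3v]

lemma S3_zero_uv (r : ℕ) (y : V3 r) (x w : ℝ) :
    S3 r y ((0 : Fin r → ℝ), (0 : Fin r → ℝ), x, w) = 0 := by
  simp [S3]

lemma A3_red (r : ℕ) (y z : V3 r) :
    A3 r y ((0, 0, 1, 0) : V3 r) ((0, 0, 1, 0) : V3 r) z = S3 r y z := by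
  simp [A3, S3]

lemma S3_probe_v (r : ℕ) (y : V3 r) (j : Fin r) :
    S3 r y (0, Pi.single j 1, 0, 0) =
      if h : 1 ≤ j.1 then y.1 ⟨j.1 - 1, by omega⟩ else 0 := by
  rw [S3]
  simp only [Pi.zero_apply, mul_zero, zero_mul, dif_pos j.pos, zero_add, add_zero]
  rcases Nat.lt_or_ge j.1 1 with hj | hj
  · rw [dif_neg (by omega)]
    refine Finset.sum_eq_zero fun i _ => ?_
    split_ifs with h
    · rw [Pi.single_apply, if_neg (by simp only [Fin.ext_iff]; omega)]
      ring
    · rfl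
  · rw [dif_pos hj, Finset.sum_eq_single (⟨j.1 - 1, by omega⟩ : Fin r)]
    · rw [dif_pos (show j.1 - 1 + 1 < r by omega),
        Pi.single_apply, if_pos (by simp only [Fin.ext_iff]; omega)]
      ring
    · intro i _ hi
      split_ifs with h
      · have hi' : i.1 ≠ j.1 - 1 := fun hh => hi (Fin.ext hh)
        rw [Pi.single_apply, if_neg (by simp only [Fin.ext_iff]; omega)]
        ring
      · rfl
    · intro h; exact absurd (Finset.mem_univ _) h

lemma S3_probe_u (r : ℕ) (y : V3 r) (j : Fin r) :
    S3 r y (Pi.single j 1, 0, 0, 0) =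
      if h : j.1 + 1 < r then y.2.1 ⟨j.1 + 1, h⟩ else y.1 j := by
  rw [S3]
  simp only [Pi.zero_apply, mul_zero, zero_mul, dif_pos j.pos, add_zero, zero_add]
  rcases Nat.lt_or_ge (j.1 + 1) r with hj | hj
  · rw [dif_pos hj, Pi.single_apply, if_neg (by simp only [Fin.ext_iff]; omega), mul_zero,
      zero_add, Finset.sum_eq_single j]
    · rw [dif_pos (by omega : j.1 + 1 < r), Pi.single_apply, if_pos rfl]
      ring
    · intro i _ hi
      split_ifs with h
      · rw [Pi.single_apply, if_neg hi]; ring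
      · rfl
    · intro h; exact absurd (Finset.mem_univ _) h
  · have hjr : j.1 = r - 1 := by omega
    rw [dif_neg (by omega), Pi.single_apply, if_pos (by simp only [Fin.ext_iff]; omega),
      mul_one, Finset.sum_eq_zero fun i _ => ?_]
    · rw [add_zero]
      exact congrArg y.1 (by apply Fin.ext; show r - 1 = j.1; omega)
    · split_ifs with h
      · rw [Pi.single_apply, if_neg (by simp only [Fin.ext_iff]; omega)]; ring
      · rfl

lemma J_eq (r : ℕ) (J : Module.End ℝ (V3 r))
    (hJ : ∀ y z : V3 r, g3v r (J y) z = A3 r y ((0, 0, 1, 0) : V3 r) ((0, 0, 1, 0) : V3 r) z) :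
    ∀ y, J y = Jf r y := by
  intro y
  have hS : ∀ z, g3v r (J y) z = S3 r y z := fun z => by rw [hJ, A3_red]
  have hu : (J y).1 = (Jf r y).1 := funext fun j => by
    rw [← g3v_probe_v r (J y) j, hS, S3_probe_v]; rfl
  have hv : (J y).2.1 = (Jf r y).2.1 := funext fun j => by
    rw [← g3v_probe_u r (J y) j, hS, S3_probe_u]; rfl
  have hx : (J y).2.2.1 = 0 := by
    rw [← g3v_probe_Y r (J y), hS, S3_zero_uv]
  have hy : (J y).2.2.2 = 0 := by
    rw [← g3v_probe_X r (J y), hS, S3_zero_uv]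
  exact Prod.ext hu (Prod.ext hv (Prod.ext hx hy))

section Powers

variable {r : ℕ} {J : Module.End ℝ (V3 r)}

lemma nilu (hx : ∀ y, J y = Jf r y) (k : ℕ) (y : V3 r) :
    ((J ^ k) y).1 = fun j => if h : k ≤ j.1 then y.1 ⟨j.1 - k, by omega⟩ else 0 := by
  induction k generalizing y with
  | zero =>
    funext j
    rw [pow_zero, Module.End.one_apply, dif_pos (Nat.zero_le _)]
    exact congrArg y.1 (by apply Fin.ext; show j.1 = j.1 - 0; omega)
  | succ k ih =>
    funext j
    rw [pow_succ, Module.End.mul_apply, ih (J y)]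
    show (if h : k ≤ j.1 then (J y).1 ⟨j.1 - k, by omega⟩ else 0) = _
    by_cases h : k + 1 ≤ j.1
    · rw [dif_pos (by omega : k ≤ j.1), dif_pos h, hx]
      show (if h : 1 ≤ j.1 - k then y.1 ⟨j.1 - k - 1, by omega⟩ else 0) = _
      rw [dif_pos (by omega)]
      exact congrArg y.1 (by apply Fin.ext; show j.1 - k - 1 = j.1 - (k + 1); omega)
    · rw [dif_neg h]
      by_cases h2 : k ≤ j.1
      · rw [dif_pos h2, hx]
        show (if h : 1 ≤ j.1 - k then y.1 ⟨j.1 - k - 1, by omega⟩ else 0) = 0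
        rw [dif_neg (by omega)]
      · rw [dif_neg h2]

lemma nilv (hx : ∀ y, J y = Jf r y) (k : ℕ) (v : Fin r → ℝ) :
    (J ^ k) ((0, v, 0, 0) : V3 r)
      = ((0, fun j => if h : j.1 + k < r then v ⟨j.1 + k, h⟩ else 0, 0, 0) : V3 r) := by
  induction k generalizing v with
  | zero =>
    rw [pow_zero, Module.End.one_apply]
    refine Prod.ext rfl (Prod.ext (funext fun j => ?_) rfl)
    show v j = if h : j.1 + 0 < r then v ⟨j.1 + 0, h⟩ else 0
    rw [dif_pos (by omega : j.1 + 0 < r)]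
    exact congrArg v (by apply Fin.ext; show j.1 = j.1 + 0; omega)
  | succ k ih =>
    rw [pow_succ', Module.End.mul_apply, ih, hx]
    refine Prod.ext (funext fun j => ?_) (Prod.ext (funext fun j => ?_) rfl)
    · show (if h : 1 ≤ j.1 then (0 : Fin r → ℝ) ⟨j.1 - 1, by omega⟩ else 0) = 0
      split_ifs <;> rfl
    · show (if h : j.1 + 1 < r then (if h2 : j.1 + 1 + k < r then v ⟨j.1 + 1 + k, h2⟩ else 0)
          else (0 : Fin r → ℝ) j)
        = if h : j.1 + (k + 1) < r then v ⟨j.1 + (k + 1), h⟩ else 0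
      by_cases h : j.1 + (k + 1) < r
      · rw [dif_pos (by omega : j.1 + 1 < r), dif_pos (by omega : j.1 + 1 + k < r), dif_pos h]
        exact congrArg v (by apply Fin.ext; show j.1 + 1 + k = j.1 + (k + 1); omega)
      · rw [dif_neg h]
        by_cases h2 : j.1 + 1 < r
        · rw [dif_pos h2, dif_neg (by omega)]
        · rw [dif_neg h2]; rfl

lemma Jr_form (hx : ∀ y, J y = Jf r y) (hr : 1 ≤ r) (y : V3 r) :
    (J ^ r) y = ((0, ((J ^ r) y).2.1, 0, 0) : V3 r) := by
  have hu : ((J ^ r) y).1 = 0 := by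
    rw [nilu hx]; funext j; rw [dif_neg (by omega)]; rfl
  have hxy : ((J ^ r) y).2.2 = (0, 0) := by
    have hpow : J ^ r = J * J ^ (r - 1) := by rw [← pow_succ']; congr 1; omega
    rw [hpow, Module.End.mul_apply, hx]; rfl
  exact Prod.ext hu (Prod.ext rfl hxy)

lemma J2r_zero (hx : ∀ y, J y = Jf r y) (hr : 1 ≤ r) : J ^ (2 * r) = 0 := by
  apply LinearMap.ext; intro y
  have h1 : J ^ (2 * r) = J ^ r * J ^ r := by rw [← pow_add]; congr 1; omega
  rw [h1, Module.End.mul_apply, LinearMap.zero_apply, Jr_form hx hr y, nilv hx]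
  refine Prod.ext rfl (Prod.ext (funext fun j => ?_) rfl)
  show (if h : j.1 + r < r then ((J ^ r) y).2.1 ⟨j.1 + r, h⟩ else 0) = (0 : ℝ)
  rw [dif_neg (by omega)]

end Powers

section Orbit

variable {r : ℕ} {J : Module.End ℝ (V3 r)}

lemma orbit1 (hx : ∀ y, J y = Jf r y) (hr : 2 ≤ r) :
    ∀ k (hk : k ≤ r - 1), (J ^ k) ((Pi.single (⟨0, Nat.zero_lt_of_lt hr⟩ : Fin r) 1, 0, 0, 0) : V3 r)
      = ((Pi.single (⟨k, by omega⟩ : Fin r) 1, 0, 0, 0) : V3 r) := by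
  intro k
  induction k with
  | zero => intro _; rw [pow_zero, Module.End.one_apply]
  | succ k ih =>
    intro hk
    rw [pow_succ', Module.End.mul_apply, ih (by omega), hx]
    refine Prod.ext (funext fun j => ?_) (Prod.ext (funext fun j => ?_) rfl)
    · show (if h : 1 ≤ j.1 then (Pi.single (⟨k, by omega⟩ : Fin r) 1 : Fin r → ℝ) ⟨j.1 - 1, by omega⟩ else 0)
        = (Pi.single (⟨k + 1, by omega⟩ : Fin r) 1 : Fin r → ℝ) j
      by_cases h : 1 ≤ j.1
      · rw [dif_pos h]
        simp only [Pi.single_apply, Fin.ext_iff]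
        have := j.isLt
        split_ifs <;> first | rfl | omega
      · rw [dif_neg h, Pi.single_apply, if_neg (by simp only [Fin.ext_iff]; omega)]
    · show (if h : j.1 + 1 < r then (0 : Fin r → ℝ) ⟨j.1 + 1, h⟩
          else (Pi.single (⟨k, by omega⟩ : Fin r) 1 : Fin r → ℝ) j) = (0 : Fin r → ℝ) j
      by_cases h : j.1 + 1 < r
      · rw [dif_pos h]; rfl
      · rw [dif_neg h, Pi.single_apply,
          if_neg (by simp only [Fin.ext_iff]; have := j.isLt; omega)]
        rfl

lemma orbit2 (hx : ∀ y, J y = Jf r y) (hr : 2 ≤ r) :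
    (J ^ r) ((Pi.single (⟨0, Nat.zero_lt_of_lt hr⟩ : Fin r) 1, 0, 0, 0) : V3 r)
      = ((0, Pi.single (⟨r - 1, by omega⟩ : Fin r) 1, 0, 0) : V3 r) := by
  have hpow : J ^ r = J * J ^ (r - 1) := by rw [← pow_succ']; congr 1; omega
  rw [hpow, Module.End.mul_apply, orbit1 hx hr (r - 1) le_rfl, hx]
  refine Prod.ext (funext fun j => ?_) (Prod.ext (funext fun j => ?_) rfl)
  · show (if h : 1 ≤ j.1 then (Pi.single (⟨r - 1, by omega⟩ : Fin r) 1 : Fin r → ℝ) ⟨j.1 - 1, by omega⟩ else 0)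
      = (0 : Fin r → ℝ) j
    by_cases h : 1 ≤ j.1
    · rw [dif_pos h, Pi.single_apply,
        if_neg (by simp only [Fin.ext_iff]; have := j.isLt; omega)]
      rfl
    · rw [dif_neg h]; rfl
  · show (if h : j.1 + 1 < r then (0 : Fin r → ℝ) ⟨j.1 + 1, h⟩
        else (Pi.single (⟨r - 1, by omega⟩ : Fin r) 1 : Fin r → ℝ) j)
      = (Pi.single (⟨r - 1, by omega⟩ : Fin r) 1 : Fin r → ℝ) j
    by_cases h : j.1 + 1 < r
    · rw [dif_pos h, Pi.single_apply, if_neg (by simp only [Fin.ext_iff]; omega)]; rfl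
    · rw [dif_neg h]

lemma orbit3 (hx : ∀ y, J y = Jf r y) :
    ∀ m (t : Fin r) (hm : m ≤ t.1),
      (J ^ m) ((0, Pi.single t 1, 0, 0) : V3 r)
        = ((0, Pi.single (⟨t.1 - m, by omega⟩ : Fin r) 1, 0, 0) : V3 r) := by
  intro m
  induction m with
  | zero =>
    intro t _
    rw [pow_zero, Module.End.one_apply]
    refine Prod.ext rfl (Prod.ext ?_ rfl)
    exact congrArg (fun i : Fin r => Pi.single i (1 : ℝ))
      (by apply Fin.ext; show t.1 = t.1 - 0; omega)
  | succ m ih =>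
    intro t ht
    rw [pow_succ', Module.End.mul_apply, ih t (by omega), hx]
    refine Prod.ext (funext fun j => ?_) (Prod.ext (funext fun j => ?_) rfl)
    · show (if h : 1 ≤ j.1 then (0 : Fin r → ℝ) ⟨j.1 - 1, by omega⟩ else 0) = (0 : Fin r → ℝ) j
      split_ifs <;> rfl
    · show (if h : j.1 + 1 < r then (Pi.single (⟨t.1 - m, by omega⟩ : Fin r) 1 : Fin r → ℝ) ⟨j.1 + 1, h⟩
          else (0 : Fin r → ℝ) j)
        = (Pi.single (⟨t.1 - (m + 1), by omega⟩ : Fin r) 1 : Fin r → ℝ) j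
      by_cases h : j.1 + 1 < r
      · rw [dif_pos h]
        simp only [Pi.single_apply, Fin.ext_iff]
        have := j.isLt
        have := t.isLt
        split_ifs <;> first | rfl | omega
      · rw [dif_neg h, Pi.single_apply,
          if_neg (by simp only [Fin.ext_iff]; have := j.isLt; have := t.isLt; omega)]
        rfl

end Orbit

/-- Theorem 1.6 (3), sharpness: the Jacobi operator of the vector `X` satisfies
`J(X)^{2r-1} U₁ = ± V₁ ≠ 0`, so `J(X)` is nilpotent of order exactly `2r`. -/
theorem stmt11 (r : ℕ) (hr : 2 ≤ r) (J : Module.End ℝ (V3 r))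
    (hJ : ∀ y z : V3 r, g3v r (J y) z = A3 r y ((0, 0, 1, 0) : V3 r) ((0, 0, 1, 0) : V3 r) z) :
    ((J ^ (2 * r - 1)) ((Pi.single (⟨0, by omega⟩ : Fin r) 1, 0, 0, 0) : V3 r)
        = ((0, Pi.single (⟨0, by omega⟩ : Fin r) 1, 0, 0) : V3 r) ∨
     (J ^ (2 * r - 1)) ((Pi.single (⟨0, by omega⟩ : Fin r) 1, 0, 0, 0) : V3 r)
        = -((0, Pi.single (⟨0, by omega⟩ : Fin r) 1, 0, 0) : V3 r)) ∧
    (J ^ (2 * r - 1)) ((Pi.single (⟨0, by omega⟩ : Fin r) 1, 0, 0, 0) : V3 r) ≠ 0 ∧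
    J ^ (2 * r) = 0 := by
  have hx := J_eq r J hJ
  have h2r1 : (J ^ (2 * r - 1)) ((Pi.single (⟨0, by omega⟩ : Fin r) 1, 0, 0, 0) : V3 r)
      = ((0, Pi.single (⟨0, by omega⟩ : Fin r) 1, 0, 0) : V3 r) := by
    have hsplit : J ^ (2 * r - 1) = J ^ (r - 1) * J ^ r := by
      rw [← pow_add]; congr 1; omega
    rw [hsplit, Module.End.mul_apply, orbit2 hx hr,
      orbit3 hx (r - 1) ⟨r - 1, by omega⟩ le_rfl]
    refine Prod.ext rfl (Prod.ext ?_ rfl)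
    exact congrArg (fun i : Fin r => Pi.single i (1 : ℝ))
      (by apply Fin.ext; show r - 1 - (r - 1) = 0; omega)
  refine ⟨Or.inl h2r1, ?_, J2r_zero hx (by omega)⟩
  rw [h2r1]
  intro hcontr
  have h0 := congrArg (fun p : V3 r => p.2.1 ⟨0, by omega⟩) hcontr
  simp at h0
end

section
/- The model 𝒰_{3,r} = (ℝ^{2r+2}, g, A) is irreducible: there is no orthogonal direct sum decomposition ℝ^{2r+2} = W₁ ⊕ W₂ with both W₁ and W₂ nonzero and non-degenerate for g, such that A vanishes whenever its arguments mix W₁ and W₂. -/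
def XV (r : ℕ) : V3 r := (0, 0, 1, 0)

def UR (r : ℕ) (hr : 0 < r) : V3 r :=
  (Pi.single ⟨r - 1, Nat.sub_lt hr Nat.one_pos⟩ 1, 0, 0, 0)

lemma S3_symm (r : ℕ) (b c : V3 r) : S3 r b c = S3 r c b := by
  unfold S3
  congr 1
  · split <;> ring
  · exact Finset.sum_congr rfl fun i _ => by split <;> ring

lemma S3_XV_left (r : ℕ) (b : V3 r) : S3 r (XV r) b = 0 := by
  simp [S3, XV]

lemma S3_XV_right (r : ℕ) (b : V3 r) : S3 r b (XV r) = 0 := by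
  rw [S3_symm]; exact S3_XV_left r b

lemma S3_UR_right (r : ℕ) (hr : 0 < r) (b : V3 r) :
    S3 r b (UR r hr) = b.1 ⟨r - 1, Nat.sub_lt hr Nat.one_pos⟩ := by
  unfold S3 UR
  rw [dif_pos hr]
  have h2 : ∀ i : Fin r, (if h : i.1 + 1 < r
      then b.1 i * (0 : Fin r → ℝ) ⟨i.1 + 1, h⟩ +
        b.2.1 ⟨i.1 + 1, h⟩ * (Pi.single (⟨r - 1, Nat.sub_lt hr Nat.one_pos⟩ : Fin r) (1:ℝ) : Fin r → ℝ) i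
      else 0) = 0 := by
    intro i
    split
    case isTrue h =>
      have hne : i ≠ (⟨r - 1, Nat.sub_lt hr Nat.one_pos⟩ : Fin r) := by
        intro he
        rw [Fin.ext_iff] at he
        simp only at he
        omega
      simp [Pi.single_apply, hne]
    case isFalse => rfl
  rw [Finset.sum_congr rfl fun i _ => h2 i]
  simp [Pi.single_eq_same]

lemma S3_UR_UR (r : ℕ) (hr : 0 < r) : S3 r (UR r hr) (UR r hr) = 1 := by
  rw [S3_UR_right]
  simp [UR, Pi.single_eq_same]

lemma XV_x (r : ℕ) : (XV r).2.2.1 = 1 := rfl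
lemma UR_x (r : ℕ) (hr : 0 < r) : (UR r hr).2.2.1 = 0 := rfl

lemma S3_single_v (r : ℕ) (b : V3 r) (i : Fin r) (h : i.1 + 1 < r) :
    S3 r b ((0, Pi.single ⟨i.1 + 1, h⟩ 1, 0, 0) : V3 r) = b.1 i := by
  have hr : 0 < r := by omega
  rw [S3, dif_pos hr]
  simp only [Pi.zero_apply, mul_zero, zero_add]
  rw [Finset.sum_eq_single i]
  · rw [dif_pos h]; simp [Pi.single_eq_same]
  · intro k _ hk
    split
    case isTrue hk2 =>
      have hne : (⟨k.1 + 1, hk2⟩ : Fin r) ≠ ⟨i.1 + 1, h⟩ := by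
        simp only [ne_eq, Fin.mk.injEq]
        intro he
        exact hk (Fin.ext (by omega))
      simp [Pi.single_apply, hne]
    case isFalse => rfl
  · intro hi; exact absurd (Finset.mem_univ i) hi

lemma A3_swap12 (r : ℕ) (a b c d : V3 r) : A3 r b a c d = - A3 r a b c d := by
  unfold A3; ring

lemma A3_swap34 (r : ℕ) (a b c d : V3 r) : A3 r a b d c = - A3 r a b c d := by
  unfold A3; ring

lemma A3_pair (r : ℕ) (a b c d : V3 r) : A3 r c d a b = A3 r a b c d := by
  unfold A3
  rw [S3_symm r d a, S3_symm r d b, S3_symm r c a, S3_symm r c b]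
  ring

lemma key3 (r : ℕ) (hr : 2 ≤ r) (W₁ W₂ : Submodule ℝ (V3 r))
    (hA : ∀ ξ₁ ∈ W₁, ∀ ξ₂ ∈ W₂, ∀ η ζ : V3 r,
        A3 r ξ₁ ξ₂ η ζ = 0 ∧ A3 r ξ₁ η ξ₂ ζ = 0 ∧ A3 r ξ₁ η ζ ξ₂ = 0)
    (hnd : ∀ w ∈ W₂, (∀ w' ∈ W₂, g3v r w w' = 0) → w = 0)
    (ξ₁ : V3 r) (h1 : ξ₁ ∈ W₁) (hp : ξ₁.2.2.1 ≠ 0) : W₂ = ⊥ := by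
  have hr0 : 0 < r := by omega
  have main : ∀ w ∈ W₂, w.2.2.1 = 0 ∧ ∀ i : Fin r, w.1 i = 0 := by
    intro w hw
    have hx : w.2.2.1 = 0 := by
      have h2 := (hA ξ₁ h1 w hw (UR r hr0) (UR r hr0)).2.1
      rw [A3, UR_x, S3_UR_UR] at h2
      have h3 : ξ₁.2.2.1 * w.2.2.1 = 0 := by linear_combination -h2
      exact (mul_eq_zero.mp h3).resolve_left hp
    have hS : ∀ ζ : V3 r, S3 r w ζ = 0 := by
      intro ζ
      have h3 := (hA ξ₁ h1 w hw (XV r) ζ).1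
      rw [A3, XV_x, S3_XV_right, S3_XV_right, hx] at h3
      have h4 : S3 r w ζ * ξ₁.2.2.1 = 0 := by linear_combination -h3
      exact (mul_eq_zero.mp h4).resolve_right hp
    refine ⟨hx, fun i => ?_⟩
    by_cases hi : i.1 + 1 < r
    · rw [← S3_single_v r w i hi]; exact hS _
    · have hi2 := i.2
      have hieq : i = ⟨r - 1, Nat.sub_lt hr0 Nat.one_pos⟩ := by
        apply Fin.ext
        show i.1 = r - 1
        omega
      rw [hieq, ← S3_UR_right r hr0 w]; exact hS _
  rw [Submodule.eq_bot_iff]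
  intro w hw
  apply hnd w hw
  intro w' hw'
  obtain ⟨hx, hu⟩ := main w hw
  obtain ⟨hx', hu'⟩ := main w' hw'
  rw [g3v, hx, hx']
  simp only [zero_mul, mul_zero, zero_add, add_zero]
  apply Finset.sum_eq_zero
  intro i _
  rw [hu i, hu' i]
  ring

/-- Theorem 1.5 (4), irreducibility of the model `𝒰_{3,r}`: there is no `g`-orthogonal direct sum
decomposition `ℝ^{2r+2} = W₁ ⊕ W₂` with both summands nonzero and non-degenerate for `g` such that
`A` vanishes whenever its arguments mix `W₁` and `W₂`. -/
theorem stmt12 (r : ℕ) (hr : 2 ≤ r) :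
    ¬ ∃ W₁ W₂ : Submodule ℝ (V3 r), W₁ ≠ ⊥ ∧ W₂ ≠ ⊥ ∧ IsCompl W₁ W₂ ∧
      (∀ w₁ ∈ W₁, ∀ w₂ ∈ W₂, g3v r w₁ w₂ = 0) ∧
      (∀ w ∈ W₁, (∀ w' ∈ W₁, g3v r w w' = 0) → w = 0) ∧
      (∀ w ∈ W₂, (∀ w' ∈ W₂, g3v r w w' = 0) → w = 0) ∧
      (∀ ξ₁ ∈ W₁, ∀ ξ₂ ∈ W₂, ∀ η ζ : V3 r,
        A3 r ξ₁ ξ₂ η ζ = 0 ∧ A3 r ξ₁ η ξ₂ ζ = 0 ∧ A3 r ξ₁ η ζ ξ₂ = 0) := by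
  rintro ⟨W₁, W₂, hb1, hb2, hcompl, -, hnd1, hnd2, hA⟩
  have hXtop : XV r ∈ W₁ ⊔ W₂ := by rw [hcompl.sup_eq_top]; trivial
  obtain ⟨w₁, hw₁, w₂, hw₂, hsum⟩ := Submodule.mem_sup.mp hXtop
  have hxsum : w₁.2.2.1 + w₂.2.2.1 = 1 := by
    have := congrArg (fun v : V3 r => v.2.2.1) hsum
    simpa [XV] using this
  rcases eq_or_ne w₁.2.2.1 0 with h0 | h0
  · have hA' : ∀ ξ₂ ∈ W₂, ∀ ξ₁ ∈ W₁, ∀ η ζ : V3 r,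
        A3 r ξ₂ ξ₁ η ζ = 0 ∧ A3 r ξ₂ η ξ₁ ζ = 0 ∧ A3 r ξ₂ η ζ ξ₁ = 0 := by
      intro ξ₂ h2 ξ₁ h1 η ζ
      refine ⟨?_, ?_, ?_⟩
      · rw [A3_swap12, (hA ξ₁ h1 ξ₂ h2 η ζ).1, neg_zero]
      · rw [A3_pair, (hA ξ₁ h1 ξ₂ h2 ζ η).2.1]
      · rw [A3_swap34, A3_pair, (hA ξ₁ h1 ξ₂ h2 ζ η).2.1, neg_zero]
    have h2x : w₂.2.2.1 ≠ 0 := by rw [h0, zero_add] at hxsum; rw [hxsum]; exact one_ne_zero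
    exact hb1 (key3 r hr W₂ W₁ hA' hnd1 w₂ hw₂ h2x)
  · exact hb2 (key3 r hr W₁ W₂ hA hnd2 w₁ hw₁ h0)
end
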